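/- arXiv:1405.6770 — 9 statements merged into one kernel-verified Lean document; each statement's English description precedes it below -/
import Mathlib

section
/- For every matrix X : Matrix n n ℂ, the dissipation functional of the Heisenberg (Lindblad) generator satisfies the identity 𝓖(Xᴴ*X) - 𝓖(Xᴴ)*X - Xᴴ*𝓖(X) = (X*L - L*X)ᴴ*(X*L - L*X); in particular, 𝓖(Xᴴ*X) - 𝓖(Xᴴ)*X - Xᴴ*𝓖(X) is positive semidefinite. -/
open Matrix ComplexOrder

variable {n : Type*}

/-- The Heisenberg (Lindblad) generator
`𝓖(X) = -i·(X*H - H*X) + Lᴴ*X*L - (1/2)·(Lᴴ*L*X + X*Lᴴ*L)`. -/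
noncomputable def heisGen [Fintype n] [DecidableEq n] (H L X : Matrix n n ℂ) : Matrix n n ℂ :=
  -Complex.I • (X * H - H * X) + Lᴴ * X * L - (1/2 : ℂ) • (Lᴴ * L * X + X * (Lᴴ * L))

/-- The Schrödinger (predual) generator
`𝓛(ρ) = -i·(H*ρ - ρ*H) + L*ρ*Lᴴ - (1/2)·(Lᴴ*L*ρ + ρ*Lᴴ*L)`. -/
noncomputable def schrodGen [Fintype n] [DecidableEq n] (H L ρ : Matrix n n ℂ) : Matrix n n ℂ :=
  -Complex.I • (H * ρ - ρ * H) + L * ρ * Lᴴ - (1/2 : ℂ) • (Lᴴ * L * ρ + ρ * (Lᴴ * L))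

/-- the dissipation functional equals `(X*L - L*X)ᴴ*(X*L - L*X)`;
in particular it is positive semidefinite. -/
theorem dissipation_functional_eq_and_posSemidef
    [Fintype n] [DecidableEq n] [Nonempty n]
    (H L : Matrix n n ℂ) (hH : H.IsHermitian) (X : Matrix n n ℂ) :
    heisGen H L (Xᴴ * X) - heisGen H L Xᴴ * X - Xᴴ * heisGen H L X
        = (X * L - L * X)ᴴ * (X * L - L * X)
      ∧ (heisGen H L (Xᴴ * X) - heisGen H L Xᴴ * X - Xᴴ * heisGen H L X).PosSemidef := by
  have key : heisGen H L (Xᴴ * X) - heisGen H L Xᴴ * X - Xᴴ * heisGen H L X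
      = (X * L - L * X)ᴴ * (X * L - L * X) := by
    simp only [heisGen, conjTranspose_sub, conjTranspose_mul, conjTranspose_conjTranspose,
      sub_mul, mul_sub, add_mul, mul_add, smul_mul_assoc, mul_smul_comm, smul_add, smul_sub,
      mul_assoc]
    module
  exact ⟨key, key ▸ Matrix.posSemidef_conjTranspose_mul_self _⟩
end

section
/- For every Hermitian idempotent P : Matrix n n ℂ (P Hermitian and P*P = P), one has P*𝓖(P)*P = -(P*Lᴴ*(1 - P)*L*P); in particular P*𝓖(P)*P is negative semidefinite. -/
open Matrix ComplexOrder

variable {n : Type*}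

/-- for every Hermitian idempotent `P`,
`P*𝓖(P)*P = -(P*Lᴴ*(1-P)*L*P)`; in particular `P*𝓖(P)*P` is negative semidefinite. -/
theorem projection_generator_sandwich
    [Fintype n] [DecidableEq n] [Nonempty n]
    (H L : Matrix n n ℂ) (hH : H.IsHermitian)
    (P : Matrix n n ℂ) (hP : P.IsHermitian) (hP2 : P * P = P) :
    P * heisGen H L P * P = -(P * Lᴴ * (1 - P) * L * P)
      ∧ (-(P * heisGen H L P * P)).PosSemidef := by
  have key : P * heisGen H L P * P = -(P * Lᴴ * (1 - P) * L * P) := by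
    have hPP : ∀ X : Matrix n n ℂ, P * (P * X) = P * X := fun X => by
      rw [← mul_assoc, hP2]
    simp only [heisGen, mul_sub, sub_mul, mul_add, add_mul, smul_mul_assoc,
      Matrix.mul_smul, mul_one, mul_assoc, hP2, hPP]
    rw [sub_self, smul_zero, zero_add, ← two_smul ℂ, smul_smul]
    norm_num
  refine ⟨key, ?_⟩
  rw [key, neg_neg]
  have h1 : P * Lᴴ * (1 - P) * L * P = ((1 - P) * L * P)ᴴ * ((1 - P) * L * P) := by
    have h1P : (1 - P) * (1 - P) = 1 - P := by
      simp [sub_mul, mul_sub, hP2]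
    have hherm : (1 - P)ᴴ = 1 - P := by
      rw [conjTranspose_sub, conjTranspose_one, hP.eq]
    simp only [conjTranspose_mul, hherm, hP.eq]
    calc P * Lᴴ * (1 - P) * L * P
        = P * Lᴴ * ((1 - P) * (1 - P)) * L * P := by rw [h1P]
      _ = P * Lᴴ * (1 - P) * ((1 - P) * (L * P)) := by simp only [mul_assoc]
      _ = _ := by simp only [mul_assoc]
  rw [h1]
  exact posSemidef_conjTranspose_mul_self _
end

section
/- Let ρ be an invariant state and let P : Matrix n n ℂ be its support projection, i.e. P is Hermitian, P*P = P, and the range of the linear map x ↦ P.mulVec x equals the range of x ↦ ρ.mulVec x. Then 𝓖(P) is positive semidefinite (the support projection of an invariant state is subharmonic). -/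
open Matrix ComplexOrder

variable {n : Type*}

private lemma matrix_ext_mulVec [Fintype n] [DecidableEq n] {A B : Matrix n n ℂ}
    (h : ∀ v, A.mulVec v = B.mulVec v) : A = B := by
  ext i j
  have := congrFun (h (Pi.single j 1)) i
  simpa [Matrix.mulVec_single] using this

/-- the support projection of an invariant state is subharmonic:
`𝓖(P)` is positive semidefinite. -/
theorem support_projection_subharmonic
    [Fintype n] [DecidableEq n] [Nonempty n]
    (H L : Matrix n n ℂ) (hH : H.IsHermitian)
    (ρ : Matrix n n ℂ) (hρ : ρ.PosSemidef) (hρtr : ρ.trace = 1)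
    (hinv : schrodGen H L ρ = 0)
    (P : Matrix n n ℂ) (hP : P.IsHermitian) (hP2 : P * P = P)
    (hsupp : LinearMap.range P.mulVecLin = LinearMap.range ρ.mulVecLin) :
    (heisGen H L P).PosSemidef := by
  -- basic facts about the support projection
  have hPρ : P * ρ = ρ := by
    apply matrix_ext_mulVec
    intro v
    have : ρ.mulVec v ∈ LinearMap.range P.mulVecLin := by
      rw [hsupp]; exact ⟨v, rfl⟩
    obtain ⟨u, hu⟩ := this
    rw [Matrix.mulVecLin_apply] at hu
    rw [← Matrix.mulVec_mulVec, ← hu, Matrix.mulVec_mulVec, hP2, hu]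
  have hρP : ρ * P = ρ := by
    have := congrArg conjTranspose hPρ
    rwa [Matrix.conjTranspose_mul, hρ.isHermitian.eq, hP.eq] at this
  have hkill : ∀ X : Matrix n n ℂ, X * ρ = 0 → X * P = 0 := by
    intro X hX
    apply matrix_ext_mulVec
    intro v
    have : P.mulVec v ∈ LinearMap.range ρ.mulVecLin := by
      rw [← hsupp]; exact ⟨v, rfl⟩
    obtain ⟨u, hu⟩ := this
    rw [Matrix.mulVecLin_apply] at hu
    rw [← Matrix.mulVec_mulVec, ← hu, Matrix.mulVec_mulVec, hX, Matrix.zero_mulVec,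
      Matrix.zero_mulVec]
  set Q : Matrix n n ℂ := 1 - P with hQdef
  have hQρ : Q * ρ = 0 := by rw [hQdef, sub_mul, one_mul, hPρ, sub_self]
  have hρQ : ρ * Q = 0 := by rw [hQdef, mul_sub, mul_one, hρP, sub_self]
  have hQH : Qᴴ = Q := by rw [hQdef, conjTranspose_sub, conjTranspose_one, hP.eq]
  have z1 : ∀ X : Matrix n n ℂ, Q * (ρ * X) = 0 := fun X => by
    rw [← mul_assoc, hQρ, zero_mul]
  -- Step 1 : Q L ρ Lᴴ Q = 0
  have h1 : Q * (L * (ρ * (Lᴴ * Q))) = 0 := by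
    have := congrArg (fun X => Q * X * Q) hinv
    simp only [schrodGen, mul_zero, zero_mul, mul_add, add_mul, mul_sub, sub_mul,
      mul_smul_comm, smul_mul_assoc, mul_assoc, hρQ, z1, smul_zero, sub_zero, zero_sub,
      zero_add, add_zero, neg_zero, smul_add, smul_sub] at this
    simpa using this
  -- hence Q L ρ = 0 and Q L P = 0
  have hQLρ : Q * L * ρ = 0 := by
    obtain ⟨s, hsH, hss⟩ : ∃ s : Matrix n n ℂ, sᴴ = s ∧ s * s = ρ :=
      by
        open scoped MatrixOrder in
        obtain ⟨X, hX, -, hXX⟩ :=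
          CFC.exists_sqrt_of_isSelfAdjoint_of_quasispectrumRestricts hρ.isHermitian
            (QuasispectrumRestricts.nnreal_of_nonneg hρ.nonneg)
        exact ⟨X, hX.star_eq, hXX⟩
    have key : (Q * L * s) * (Q * L * s)ᴴ = Q * (L * (ρ * (Lᴴ * Q))) := by
      rw [conjTranspose_mul, conjTranspose_mul, hQH, hsH, ← hss]
      noncomm_ring
    have hz : Q * L * s = 0 := Matrix.self_mul_conjTranspose_eq_zero.mp (key.trans h1)
    calc Q * L * ρ = (Q * L * s) * s := by rw [← hss]; noncomm_ring
      _ = 0 := by rw [hz, zero_mul]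
  have hQLP : Q * L * P = 0 := hkill _ hQLρ
  have z2 : ∀ X : Matrix n n ℂ, Q * (L * (ρ * X)) = 0 := fun X => by
    calc Q * (L * (ρ * X)) = (Q * L * ρ) * X := by noncomm_ring
      _ = 0 := by rw [hQLρ, zero_mul]
  -- Step 2 : the Q-H-P relation
  have h2 : -Complex.I • (Q * (H * ρ)) - (1/2 : ℂ) • (Q * (Lᴴ * (L * ρ))) = 0 := by
    have := congrArg (fun X => Q * X * P) hinv
    simp only [schrodGen, mul_zero, zero_mul, mul_add, add_mul, mul_sub, sub_mul,
      mul_smul_comm, smul_mul_assoc, mul_assoc, hρP, z1, z2, smul_zero, sub_zero, zero_sub,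
      zero_add, add_zero, neg_zero, smul_add, smul_sub] at this
    simpa using this
  have hA : Q * (H * ρ) = (Complex.I/2) • (Q * (Lᴴ * (L * ρ))) := by
    have h3 : -Complex.I • (Q * (H * ρ)) = (1/2 : ℂ) • (Q * (Lᴴ * (L * ρ))) :=
      sub_eq_zero.mp h2
    calc Q * (H * ρ) = Complex.I • (-Complex.I • (Q * (H * ρ))) := by
          rw [smul_smul,
            show Complex.I * -Complex.I = (1:ℂ) from by linear_combination (-1:ℂ) * Complex.I_mul_I,
            one_smul]
      _ = Complex.I • ((1/2 : ℂ) • (Q * (Lᴴ * (L * ρ)))) := by rw [h3]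
      _ = (Complex.I/2) • (Q * (Lᴴ * (L * ρ))) := by
          rw [smul_smul]
          congr 1
          ring
  have hXρ : (Q * H - (Complex.I/2) • (Q * (Lᴴ * L))) * ρ = 0 := by
    have e : (Q * H - (Complex.I/2) • (Q * (Lᴴ * L))) * ρ
        = Q * (H * ρ) - (Complex.I/2) • (Q * (Lᴴ * (L * ρ))) := by
      simp only [sub_mul, smul_mul_assoc, mul_assoc]
    rw [e, hA, sub_self]
  have hXP := hkill _ hXρ
  have hQHP : Q * (H * P) = (Complex.I/2) • (Q * (Lᴴ * (L * P))) := by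
    have e : (Q * H - (Complex.I/2) • (Q * (Lᴴ * L))) * P
        = Q * (H * P) - (Complex.I/2) • (Q * (Lᴴ * (L * P))) := by
      simp only [sub_mul, smul_mul_assoc, mul_assoc]
    rw [e] at hXP
    exact sub_eq_zero.mp hXP
  -- adjoint relations
  have hPLH : P * Lᴴ * Q = 0 := by
    have := congrArg conjTranspose hQLP
    simpa [conjTranspose_mul, hQH, hP.eq, mul_assoc] using this
  have hPHQ : P * H * Q = (-(Complex.I/2)) • (P * Lᴴ * L * Q) := by
    have := congrArg conjTranspose hQHP
    simp only [conjTranspose_mul, conjTranspose_smul, hQH, hP.eq, hH.eq,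
      conjTranspose_conjTranspose] at this
    rw [this]
    congr 1
    rw [Complex.ext_iff]
    constructor <;> simp <;> norm_num
  -- the four structure relations with Q eliminated
  have r1 : L * P = P * L * P := by
    have := hQLP
    rw [hQdef, sub_mul, sub_mul, one_mul, sub_eq_zero] at this
    exact this
  have r2 : P * Lᴴ = P * Lᴴ * P := by
    have := hPLH
    rw [hQdef, mul_sub, mul_one, sub_eq_zero] at this
    exact this
  have r3' : Complex.I • (H * P - P * (H * P))
      = (-(1/2) : ℂ) • (Lᴴ * (L * P) - P * (Lᴴ * (L * P))) := by
    have e : Q * (H * P) = H * P - P * (H * P) := by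
      rw [hQdef, sub_mul, one_mul]
    have e2 : Q * (Lᴴ * (L * P)) = Lᴴ * (L * P) - P * (Lᴴ * (L * P)) := by
      rw [hQdef, sub_mul, one_mul]
    rw [← e, ← e2, hQHP, smul_smul]
    congr 1
    rw [div_eq_mul_inv]
    linear_combination (2⁻¹ : ℂ) * Complex.I_mul_I
  have r4' : Complex.I • (P * H - P * H * P)
      = ((1/2) : ℂ) • (P * (Lᴴ * L) - P * (Lᴴ * L) * P) := by
    have e : P * H * Q = P * H - P * H * P := by
      rw [hQdef, mul_sub, mul_one]
    have e2 : P * Lᴴ * L * Q = P * (Lᴴ * L) - P * (Lᴴ * L) * P := by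
      rw [hQdef]; noncomm_ring
    rw [← e, ← e2, hPHQ, smul_smul]
    congr 1
    linear_combination (-(2⁻¹) : ℂ) * Complex.I_mul_I
  -- the main algebraic identity
  have main : heisGen H L P = (P * (L * Q))ᴴ * (P * (L * Q)) := by
    have hCt : (P * (L * Q))ᴴ = Q * (Lᴴ * P) := by
      simp [conjTranspose_mul, hP.eq, hQH, mul_assoc]
    rw [hCt, hQdef]
    unfold heisGen
    linear_combination (norm := (simp only [mul_add, add_mul, mul_sub, sub_mul, smul_add,
      smul_sub, mul_assoc, smul_mul_assoc, mul_smul_comm, one_mul, mul_one, sub_zero]; module))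
      r3' - r4' - Lᴴ * r1 - r2 * L + r2 * (L * P)
      - ((1 - P) * Lᴴ) * hP2 * (L * (1 - P))
  rw [main]
  exact Matrix.posSemidef_conjTranspose_mul_self _
end

section
/- Let ρ be an invariant state and let P : Matrix n n ℂ be its support projection, i.e. P is Hermitian, P*P = P, and the range of the linear map x ↦ P.mulVec x equals the range of x ↦ ρ.mulVec x. Then P*Lᴴ*(1 - P)*L*P = 0. -/
open Matrix ComplexOrder

variable {n : Type*}

private lemma mulVec_ext' [Fintype n] [DecidableEq n] {A B : Matrix n n ℂ}
    (h : ∀ x, A.mulVec x = B.mulVec x) : A = B := by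
  ext i j
  have := congrFun (h (Pi.single j 1)) i
  simpa using this

section SqrtPort
open scoped MatrixOrder

noncomputable def Matrix.PosSemidef.sqrt [Fintype n] [DecidableEq n] {A : Matrix n n ℂ}
    (_ : A.PosSemidef) : Matrix n n ℂ :=
  CFC.sqrt A

lemma Matrix.PosSemidef.sqrt_mul_self [Fintype n] [DecidableEq n] {A : Matrix n n ℂ}
    (hA : A.PosSemidef) : hA.sqrt * hA.sqrt = A :=
  CFC.sqrt_mul_sqrt_self A hA.nonneg

lemma Matrix.PosSemidef.posSemidef_sqrt [Fintype n] [DecidableEq n] {A : Matrix n n ℂ}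
    (hA : A.PosSemidef) : hA.sqrt.PosSemidef :=
  (CFC.sqrt_nonneg A).posSemidef

end SqrtPort

/-- for the support projection `P` of an invariant state,
`P*Lᴴ*(1-P)*L*P = 0`. -/
theorem support_projection_dissipation_vanishes
    [Fintype n] [DecidableEq n] [Nonempty n]
    (H L : Matrix n n ℂ) (hH : H.IsHermitian)
    (ρ : Matrix n n ℂ) (hρ : ρ.PosSemidef) (hρtr : ρ.trace = 1)
    (hinv : schrodGen H L ρ = 0)
    (P : Matrix n n ℂ) (hP : P.IsHermitian) (hP2 : P * P = P)
    (hsupp : LinearMap.range P.mulVecLin = LinearMap.range ρ.mulVecLin) :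
    P * Lᴴ * (1 - P) * L * P = 0 := by
  -- P fixes the range of ρ: P * ρ = ρ
  have hPρ : P * ρ = ρ := by
    apply mulVec_ext'
    intro x
    have hmem : ρ.mulVec x ∈ LinearMap.range P.mulVecLin := by
      rw [hsupp]; exact ⟨x, rfl⟩
    obtain ⟨y, hy⟩ := hmem
    have hy' : P *ᵥ y = ρ *ᵥ x := hy
    rw [← Matrix.mulVec_mulVec, ← hy', Matrix.mulVec_mulVec, hP2, hy']
  have hρP : ρ * P = ρ := by
    have := congrArg Matrix.conjTranspose hPρ
    simpa [Matrix.conjTranspose_mul, hP.eq, hρ.1.eq] using this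
  set Q : Matrix n n ℂ := 1 - P with hQ
  have hQρ : Q * ρ = 0 := by simp [hQ, Matrix.sub_mul, hPρ]
  have hρQ : ρ * Q = 0 := by simp [hQ, Matrix.mul_sub, hρP]
  -- from invariance: Q * L * ρ * Lᴴ * Q = 0
  have key : Q * (L * ρ * Lᴴ) * Q = 0 := by
    have h0 : Q * schrodGen H L ρ * Q = 0 := by rw [hinv]; simp
    have hexp : Q * schrodGen H L ρ * Q = Q * (L * ρ * Lᴴ) * Q := by
      unfold schrodGen
      have h1 : Q * (H * ρ) * Q = 0 := by
        rw [show Q * (H * ρ) * Q = Q * H * (ρ * Q) by noncomm_ring, hρQ, mul_zero]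
      have h2 : Q * (ρ * H) * Q = 0 := by
        rw [show Q * (ρ * H) * Q = Q * ρ * (H * Q) by noncomm_ring, hQρ]
        simp
      have h3 : Q * (Lᴴ * L * ρ) * Q = 0 := by
        rw [show Q * (Lᴴ * L * ρ) * Q = Q * (Lᴴ * L) * (ρ * Q) by noncomm_ring, hρQ, mul_zero]
      have h4 : Q * (ρ * (Lᴴ * L)) * Q = 0 := by
        rw [show Q * (ρ * (Lᴴ * L)) * Q = Q * ρ * (Lᴴ * L * Q) by noncomm_ring, hQρ]
        simp
      simp only [Matrix.add_mul, Matrix.mul_add, Matrix.sub_mul, Matrix.mul_sub,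
        Matrix.smul_mul, Matrix.mul_smul]
      rw [h1, h2, h3, h4]
      simp
    rw [← hexp, h0]
  -- hence (Q*L) * ρ * (Q*L)ᴴ = 0
  have hQherm : Qᴴ = Q := by simp [hQ, hP.eq]
  have key2 : (Q * L) * ρ * (Q * L)ᴴ = 0 := by
    rw [Matrix.conjTranspose_mul, hQherm]
    calc Q * L * ρ * (Lᴴ * Q) = Q * (L * ρ * Lᴴ) * Q := by noncomm_ring
    _ = 0 := key
  -- using ρ = √ρ * √ρ, conclude (Q*L) * √ρ = 0, hence Q*L*ρ = 0
  have hs := hρ.sqrt_mul_self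
  have hsH : hρ.sqrtᴴ = hρ.sqrt := hρ.posSemidef_sqrt.1.eq ▸ hρ.posSemidef_sqrt.1
  have hzero : Q * L * hρ.sqrt = 0 := by
    rw [← Matrix.self_mul_conjTranspose_eq_zero]
    have h5 : Q * L * hρ.sqrt * (Q * L * hρ.sqrt)ᴴ = Q * L * (hρ.sqrt * hρ.sqrt) * (Q * L)ᴴ := by
      rw [Matrix.conjTranspose_mul (Q * L) hρ.sqrt, hsH]
      noncomm_ring
    rw [h5, hs]
    exact key2
  have hQLρ : Q * L * ρ = 0 := by
    rw [← hs, ← mul_assoc, hzero, Matrix.zero_mul]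
  -- hence Q*L*P = 0 since range P = range ρ
  have hQLP : Q * L * P = 0 := by
    apply mulVec_ext'
    intro x
    have hmem : P.mulVec x ∈ LinearMap.range ρ.mulVecLin := by
      rw [← hsupp]; exact ⟨x, rfl⟩
    obtain ⟨y, hy⟩ := hmem
    have hy' : ρ *ᵥ y = P *ᵥ x := hy
    rw [← Matrix.mulVec_mulVec, ← hy', Matrix.mulVec_mulVec, hQLρ]
    simp
  calc P * Lᴴ * (1 - P) * L * P = P * Lᴴ * (Q * L * P) := by rw [← hQ]; noncomm_ring
  _ = 0 := by rw [hQLP, mul_zero]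
end

section
/- Suppose that for every Hermitian idempotent P : Matrix n n ℂ with P ≠ 0 and P ≠ 1 one has P*Lᴴ*(1 - P)*L*P ≠ 0. Then every invariant state ρ is faithful, i.e. ρ is positive definite. -/
open Matrix ComplexOrder

variable {n : Type*}

/-- if `P*Lᴴ*(1-P)*L*P ≠ 0` for every non-trivial Hermitian idempotent `P`,
then every invariant state is faithful (positive definite). -/
theorem invariant_state_faithful
    [Fintype n] [DecidableEq n] [Nonempty n]
    (H L : Matrix n n ℂ) (hH : H.IsHermitian)
    (hcond : ∀ P : Matrix n n ℂ, P.IsHermitian → P * P = P → P ≠ 0 → P ≠ 1 →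
      P * Lᴴ * (1 - P) * L * P ≠ 0)
    (ρ : Matrix n n ℂ) (hρ : ρ.PosSemidef) (hρtr : ρ.trace = 1)
    (hinv : schrodGen H L ρ = 0) :
    ρ.PosDef := by
  by_contra hn
  -- a nonzero kernel vector
  have hker : ∃ x : n → ℂ, x ≠ 0 ∧ ρ *ᵥ x = 0 := by
    by_contra hk
    push_neg at hk
    exact hn (posDef_iff_dotProduct_mulVec.mpr ⟨hρ.1, fun x hx => lt_of_le_of_ne
      (hρ.dotProduct_mulVec_nonneg x)
      (fun h0 => hk x hx ((hρ.dotProduct_mulVec_zero_iff x).mp h0.symm))⟩)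
  obtain ⟨x, hx0, hρx⟩ := hker
  -- spectral data
  set hherm := hρ.1 with hherm_def
  set U : Matrix n n ℂ := (hherm.eigenvectorUnitary : Matrix n n ℂ) with hU_def
  have hU1 : star U * U = 1 := Unitary.coe_star_mul_self _
  set d : n → ℂ := RCLike.ofReal ∘ hherm.eigenvalues with hd_def
  set e : n → ℂ := fun i => if hherm.eigenvalues i = 0 then 0 else 1 with he_def
  set g : n → ℂ := fun i => if hherm.eigenvalues i = 0 then 0 else ((hherm.eigenvalues i : ℂ))⁻¹
    with hg_def
  have hspec : ρ = U * diagonal d * star U := hherm.spectral_theorem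
  set P : Matrix n n ℂ := U * diagonal e * star U with hP_def
  set Qi : Matrix n n ℂ := U * diagonal g * star U with hQi_def
  have hmul : ∀ a b : n → ℂ,
      (U * diagonal a * star U) * (U * diagonal b * star U) = U * diagonal (a * b) * star U := by
    intro a b
    simp only [mul_assoc]
    rw [← mul_assoc (star U), hU1, one_mul, ← mul_assoc (diagonal a), diagonal_mul_diagonal]; rfl
  have hee : e * e = e := by
    funext i; by_cases h : hherm.eigenvalues i = 0 <;> simp [he_def, h]
  have hde : d * e = d := by
    funext i; by_cases h : hherm.eigenvalues i = 0 <;> simp [hd_def, he_def, h]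
  have hed : e * d = d := by rw [mul_comm, hde]
  have hgd : g * d = e := by
    funext i; by_cases h : hherm.eigenvalues i = 0 <;>
      simp [hd_def, he_def, hg_def, h, inv_mul_cancel₀, Complex.ofReal_ne_zero]
  have hdg : d * g = e := by rw [mul_comm, hgd]
  -- basic properties of P
  have hPP : P * P = P := by rw [hP_def, hmul, hee]
  have hste : star e = e := by
    funext i; by_cases h : hherm.eigenvalues i = 0 <;> simp [he_def, h]
  have hPH : P.IsHermitian := by
    show Pᴴ = P
    rw [hP_def, conjTranspose_mul, conjTranspose_mul, diagonal_conjTranspose, hste,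
      ← star_eq_conjTranspose, ← star_eq_conjTranspose, star_star, mul_assoc]
  have hρP : ρ * P = ρ := by rw [hspec, hP_def, hmul, hde]
  have hPρ : P * ρ = ρ := by rw [hspec, hP_def, hmul, hed]
  have hρQi : ρ * Qi = P := by rw [hspec, hQi_def, hP_def, hmul, hdg]
  have hQiρ : Qi * ρ = P := by rw [hspec, hQi_def, hP_def, hmul, hgd]
  have hP0 : P ≠ 0 := by
    intro h
    have : ρ = 0 := by rw [← hρP, h, mul_zero]
    rw [this, trace_zero] at hρtr
    exact one_ne_zero hρtr.symm
  have hP1 : P ≠ 1 := by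
    intro h
    have : P *ᵥ x = 0 := by rw [← hQiρ, ← mulVec_mulVec, hρx, mulVec_zero]
    rw [h, one_mulVec] at this
    exact hx0 this
  -- the complementary projection
  set Q : Matrix n n ℂ := 1 - P with hQ_def
  have hQρ : Q * ρ = 0 := by rw [hQ_def, sub_mul, one_mul, hPρ, sub_self]
  have hρQ : ρ * Q = 0 := by rw [hQ_def, mul_sub, mul_one, hρP, sub_self]
  have hQρ' : ∀ X : Matrix n n ℂ, Q * (ρ * X) = 0 := by
    intro X; rw [← mul_assoc, hQρ, zero_mul]
  -- invariance squeezed by Q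
  have key : Q * (L * (ρ * (Lᴴ * Q))) = 0 := by
    have h := congrArg (fun X => Q * (X * Q)) hinv
    simp only [schrodGen, zero_mul, mul_zero, add_mul, sub_mul, mul_add, mul_sub,
      smul_mul_assoc, mul_smul_comm, mul_assoc, hρQ, hQρ', smul_zero, zero_sub, sub_zero,
      add_zero, zero_add, neg_zero, mul_one, sub_self] at h
    simp only [mul_neg, hQρ', neg_zero, smul_zero, zero_add] at h
    exact h
  -- conclude Q * L * ρ = 0
  set s : n → ℂ := fun i => ((Real.sqrt (hherm.eigenvalues i) : ℝ) : ℂ) with hs_def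
  obtain ⟨S, hS_def⟩ : ∃ S : Matrix n n ℂ, S = U * diagonal s * star U := ⟨_, rfl⟩
  have hSH : Sᴴ = S := by
    have hsts : star s = s := by funext i; simp [hs_def]
    rw [hS_def, conjTranspose_mul, conjTranspose_mul, diagonal_conjTranspose, hsts,
      ← star_eq_conjTranspose, ← star_eq_conjTranspose, star_star, mul_assoc]
  have hQH : Qᴴ = Q := by rw [hQ_def, conjTranspose_sub, conjTranspose_one, hPH.eq]
  have hSS : S * S = ρ := by
    have hssd : s * s = d := by
      funext i
      simp only [Pi.mul_apply, hs_def, hd_def, Function.comp_apply]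
      rw [← Complex.ofReal_mul, Real.mul_self_sqrt (hρ.eigenvalues_nonneg i)]
      rfl
    calc S * S = U * diagonal d * star U := by rw [hS_def, hmul, hssd]
      _ = ρ := hspec.symm
  have hM : (Q * L * S) * (Q * L * S)ᴴ = 0 := by
    rw [conjTranspose_mul, conjTranspose_mul, hSH, hQH]
    calc Q * L * S * (S * (Lᴴ * Q)) = Q * (L * (ρ * (Lᴴ * Q))) := by
          rw [← hSS]; noncomm_ring
      _ = 0 := key
  have hM0 : Q * L * S = 0 := self_mul_conjTranspose_eq_zero.mp hM
  have hQLρ : Q * L * ρ = 0 := by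
    rw [← hSS, ← mul_assoc, hM0, zero_mul]
  have hQLP : Q * L * P = 0 := by
    rw [← hρQi, ← mul_assoc, hQLρ, zero_mul]
  refine hcond P hPH hPP hP0 hP1 ?_
  calc P * Lᴴ * (1 - P) * L * P = P * Lᴴ * (Q * L * P) := by rw [← hQ_def]; noncomm_ring
    _ = 0 := by rw [hQLP, mul_zero]
end

section
/- Every finite-dimensional quantum Markov system admits an invariant state: there exists a matrix ρ : Matrix n n ℂ that is positive semidefinite, has trace 1, and satisfies 𝓛(ρ) = 0. -/
open Matrix ComplexOrder

variable {n : Type*}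

set_option linter.unusedSectionVars false
set_option maxHeartbeats 1000000

section InvariantStateAux

variable [Fintype n] [DecidableEq n]


lemma schrodGen_add (H L ρ σ : Matrix n n ℂ) :
    schrodGen H L (ρ + σ) = schrodGen H L ρ + schrodGen H L σ := by
  simp only [schrodGen, mul_add, add_mul, smul_add]
  module

lemma schrodGen_smul (H L : Matrix n n ℂ) (a : ℂ) (ρ : Matrix n n ℂ) :
    schrodGen H L (a • ρ) = a • schrodGen H L ρ := by
  simp only [schrodGen, Matrix.mul_smul, Matrix.smul_mul, smul_add, smul_sub, smul_smul,
    mul_comm]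

noncomputable def gen (H L : Matrix n n ℂ) : Matrix n n ℂ →ₗ[ℂ] Matrix n n ℂ where
  toFun := schrodGen H L
  map_add' := schrodGen_add H L
  map_smul' := schrodGen_smul H L

lemma trace_schrodGen (H L ρ : Matrix n n ℂ) : (schrodGen H L ρ).trace = 0 := by
  simp only [schrodGen, trace_add, trace_sub, trace_smul, smul_eq_mul, ← mul_assoc]
  rw [trace_mul_cycle L ρ Lᴴ, trace_mul_cycle Lᴴ L ρ, trace_mul_comm H ρ]
  ring

lemma schrodGen_conjTranspose (H L ρ : Matrix n n ℂ) (hH : H.IsHermitian) :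
    schrodGen H L ρᴴ = (schrodGen H L ρ)ᴴ := by
  have h1 : star (-Complex.I) = Complex.I := by simp
  have h2 : star (1/2 : ℂ) = 1/2 := by norm_num
  simp only [schrodGen, conjTranspose_add, conjTranspose_sub, conjTranspose_smul,
    conjTranspose_mul, conjTranspose_conjTranspose, hH.eq, h1, h2, mul_assoc]
  module



lemma unitary_conj_smul_one (U : Matrix.unitaryGroup n ℂ) (c : ℂ) :
    (U : Matrix n n ℂ) * (c • 1) * star (U : Matrix n n ℂ) = c • 1 := by
  rw [Matrix.mul_smul, Matrix.mul_one, Matrix.smul_mul,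
    (Matrix.mem_unitaryGroup_iff).mp U.2]

lemma diag_shift (d : n → ℂ) (c : ℂ) :
    Matrix.diagonal d - c • 1 = Matrix.diagonal (fun i => d i - c) := by
  ext i j
  rcases eq_or_ne i j with h | h <;>
    simp [Matrix.diagonal_apply, Matrix.one_apply, h]

lemma sub_smul_one_posSemidef {A : Matrix n n ℂ} (hA : A.IsHermitian) {r : ℝ}
    (h : ∀ i, r ≤ hA.eigenvalues i) : (A - (r : ℂ) • 1).PosSemidef := by
  have expand : (hA.eigenvectorUnitary : Matrix n n ℂ) *
      (Matrix.diagonal (RCLike.ofReal ∘ hA.eigenvalues) - (r:ℂ) • 1) *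
      star (hA.eigenvectorUnitary : Matrix n n ℂ) = A - (r:ℂ) • 1 := by
    have hs := hA.spectral_theorem
    rw [Unitary.conjStarAlgAut_apply] at hs
    rw [Matrix.mul_sub, Matrix.sub_mul, unitary_conj_smul_one, ← hs]
  rw [← expand, diag_shift]
  refine Matrix.PosSemidef.mul_mul_conjTranspose_same ?_ _
  rw [Matrix.posSemidef_diagonal_iff]
  intro i
  rw [sub_nonneg]
  exact Complex.real_le_real.mpr (h i)

lemma smul_one_sub_posSemidef {A : Matrix n n ℂ} (hA : A.IsHermitian) {r : ℝ}
    (h : ∀ i, hA.eigenvalues i ≤ r) : ((r : ℂ) • 1 - A).PosSemidef := by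
  have expand : (hA.eigenvectorUnitary : Matrix n n ℂ) *
      ((r:ℂ) • 1 - Matrix.diagonal (RCLike.ofReal ∘ hA.eigenvalues)) *
      star (hA.eigenvectorUnitary : Matrix n n ℂ) = (r:ℂ) • 1 - A := by
    have hs := hA.spectral_theorem
    rw [Unitary.conjStarAlgAut_apply] at hs
    rw [Matrix.mul_sub, Matrix.sub_mul, unitary_conj_smul_one, ← hs]
  have diag2 : (r:ℂ) • (1 : Matrix n n ℂ) - Matrix.diagonal (RCLike.ofReal ∘ hA.eigenvalues)
      = Matrix.diagonal (fun i => (r:ℂ) - (hA.eigenvalues i : ℂ)) := by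
    ext i j
    rcases eq_or_ne i j with h | h <;>
      simp [Matrix.diagonal_apply, Matrix.one_apply, h]
  rw [← expand, diag2]
  refine Matrix.PosSemidef.mul_mul_conjTranspose_same ?_ _
  rw [Matrix.posSemidef_diagonal_iff]
  intro i
  rw [sub_nonneg]
  exact Complex.real_le_real.mpr (h i)

lemma trace_eq_sum_eigenvalues {A : Matrix n n ℂ} (hA : A.IsHermitian) :
    A.trace = ∑ i, (hA.eigenvalues i : ℂ) := by
  nth_rewrite 1 [hA.spectral_theorem]
  rw [Unitary.conjStarAlgAut_apply, Matrix.trace_mul_cycle]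
  rw [(Matrix.mem_unitaryGroup_iff').mp hA.eigenvectorUnitary.2, Matrix.one_mul,
    Matrix.trace_diagonal]
  rfl

lemma rayleigh_lower {A : Matrix n n ℂ} (hA : A.IsHermitian) {r : ℝ}
    (h : ∀ i, r ≤ hA.eigenvalues i) (x : n → ℂ) :
    (r : ℂ) * (star x ⬝ᵥ x) ≤ star x ⬝ᵥ A *ᵥ x := by
  have := (sub_smul_one_posSemidef hA h).dotProduct_mulVec_nonneg x
  rw [Matrix.sub_mulVec, dotProduct_sub, sub_nonneg, Matrix.smul_mulVec,
    Matrix.one_mulVec, dotProduct_smul, smul_eq_mul] at this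
  exact this



lemma dot_shift (A : Matrix n n ℂ) (v u : n → ℂ) :
    star v ⬝ᵥ (A *ᵥ u) = star (Aᴴ *ᵥ v) ⬝ᵥ u := by
  rw [Matrix.star_mulVec, Matrix.conjTranspose_conjTranspose, ← Matrix.dotProduct_mulVec]

lemma quadform_schrodGen (H L ρ : Matrix n n ℂ) (hρ : ρ.IsHermitian) (v : n → ℂ) {lam : ℝ}
    (hv : ρ *ᵥ v = (lam : ℂ) • v) :
    star v ⬝ᵥ (schrodGen H L ρ) *ᵥ v
      = star (Lᴴ *ᵥ v) ⬝ᵥ (ρ *ᵥ (Lᴴ *ᵥ v))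
        - (lam : ℂ) * (star (L *ᵥ v) ⬝ᵥ (L *ᵥ v)) := by
  have hvs : star v ᵥ* ρ = (lam : ℂ) • star v := by
    have h := congrArg star hv
    rw [Matrix.star_mulVec, hρ.eq, star_smul, Complex.star_def, Complex.conj_ofReal] at h
    exact h
  have hdot : ∀ u : n → ℂ, star v ⬝ᵥ (ρ *ᵥ u) = (lam : ℂ) * (star v ⬝ᵥ u) := by
    intro u
    rw [Matrix.dotProduct_mulVec, hvs, smul_dotProduct, smul_eq_mul]
  simp only [schrodGen, Matrix.add_mulVec, Matrix.sub_mulVec, Matrix.smul_mulVec,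
    dotProduct_add, dotProduct_sub, dotProduct_smul, smul_eq_mul, ← Matrix.mulVec_mulVec]
  rw [hv]
  simp only [Matrix.mulVec_smul, dotProduct_smul, smul_eq_mul]
  rw [hdot (H *ᵥ v), hdot (Lᴴ *ᵥ (L *ᵥ v))]
  rw [dot_shift L v (ρ *ᵥ (Lᴴ *ᵥ v))]
  rw [show star v ⬝ᵥ (Lᴴ *ᵥ (L *ᵥ v)) = star (L *ᵥ v) ⬝ᵥ (L *ᵥ v) by
    rw [dot_shift Lᴴ, Matrix.conjTranspose_conjTranspose]]
  ring



lemma exists_good_const (H L : Matrix n n ℂ) [Nonempty n] :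
    ∃ c : ℝ, 0 < c ∧ ∀ ρ : Matrix n n ℂ, ρ.IsHermitian →
      ((c : ℂ) • ρ - schrodGen H L ρ).PosSemidef → ρ.PosSemidef := by
  classical
  set B : Matrix n n ℂ := L * Lᴴ with hBdef
  have hB : B.PosSemidef := Matrix.posSemidef_self_mul_conjTranspose L
  set t : ℝ := ∑ i, hB.1.eigenvalues i with ht
  have ht0 : 0 ≤ t := Finset.sum_nonneg fun i _ => hB.eigenvalues_nonneg i
  have hBbound : ∀ x : n → ℂ, star (Lᴴ *ᵥ x) ⬝ᵥ (Lᴴ *ᵥ x) ≤ (t : ℂ) * (star x ⬝ᵥ x) := by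
    intro x
    have hpsd := (smul_one_sub_posSemidef hB.1
      (fun i => Finset.single_le_sum (fun j _ => hB.eigenvalues_nonneg j)
        (Finset.mem_univ i))).dotProduct_mulVec_nonneg x
    rw [Matrix.sub_mulVec, dotProduct_sub, sub_nonneg, Matrix.smul_mulVec,
      Matrix.one_mulVec, dotProduct_smul, smul_eq_mul] at hpsd
    calc star (Lᴴ *ᵥ x) ⬝ᵥ (Lᴴ *ᵥ x) = star x ⬝ᵥ B *ᵥ x := by
          rw [← dot_shift L x (Lᴴ *ᵥ x), Matrix.mulVec_mulVec]
      _ ≤ (t : ℂ) * (star x ⬝ᵥ x) := hpsd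
  refine ⟨t + 1, by linarith, ?_⟩
  intro ρ hρ hσ
  obtain ⟨i0, _, hmin⟩ := Finset.exists_min_image Finset.univ hρ.eigenvalues ⟨_, Finset.mem_univ (Classical.arbitrary n)⟩
  set lam : ℝ := hρ.eigenvalues i0 with hlam
  have hmin' : ∀ i, lam ≤ hρ.eigenvalues i := fun i => hmin i (Finset.mem_univ i)
  rcases le_or_gt 0 lam with hpos | hneg
  · exact hρ.posSemidef_iff_eigenvalues_nonneg.mpr fun i => le_trans hpos (hmin' i)
  · exfalso
    set v : n → ℂ := ⇑(hρ.eigenvectorBasis i0) with hvdef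
    have hv : ρ *ᵥ v = (lam : ℂ) • v := by
      have h := hρ.mulVec_eigenvectorBasis i0
      rw [h]
      ext j
      rw [Pi.smul_apply, Pi.smul_apply, Complex.real_smul, smul_eq_mul]
    have hnorm : star v ⬝ᵥ v = 1 := by
      have h1 := hρ.eigenvectorBasis.orthonormal.1 i0
      have h2 : (inner ℂ (hρ.eigenvectorBasis i0) (hρ.eigenvectorBasis i0) : ℂ) = 1 := by
        rw [@inner_self_eq_norm_sq_to_K ℂ, h1]
        norm_num
      rw [EuclideanSpace.inner_eq_star_dotProduct, dotProduct_comm] at h2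
      exact h2
    set w : n → ℂ := Lᴴ *ᵥ v with hw
    set u : n → ℂ := L *ᵥ v with hu
    have hq := hσ.dotProduct_mulVec_nonneg v
    rw [Matrix.sub_mulVec, dotProduct_sub, Matrix.smul_mulVec, dotProduct_smul,
      smul_eq_mul, quadform_schrodGen H L ρ hρ v hv, hv, dotProduct_smul, smul_eq_mul,
      hnorm, mul_one] at hq
    -- hq : 0 ≤ (t+1) * lam - (star w ⬝ᵥ ρ *ᵥ w - lam * (star u ⬝ᵥ u))
    have hray : (lam : ℂ) * (star w ⬝ᵥ w) ≤ star w ⬝ᵥ ρ *ᵥ w := rayleigh_lower hρ hmin' w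
    have hWt : star w ⬝ᵥ w ≤ (t : ℂ) := by
      have := hBbound v
      rwa [hnorm, mul_one] at this
    have hu0 : (0 : ℂ) ≤ star u ⬝ᵥ u := dotProduct_star_self_nonneg u
    have hqq : (0:ℂ) ≤ (lam : ℂ) * (((t:ℝ)+1 : ℂ) - star w ⬝ᵥ w + star u ⬝ᵥ u) := by
      have step : ((t + 1 : ℝ) : ℂ) * lam - (star w ⬝ᵥ ρ *ᵥ w - (lam:ℂ) * (star u ⬝ᵥ u))
          ≤ (lam : ℂ) * (((t:ℝ)+1 : ℂ) - star w ⬝ᵥ w + star u ⬝ᵥ u) := by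
        have h3 : (lam : ℂ) * (((t:ℝ)+1 : ℂ) - star w ⬝ᵥ w + star u ⬝ᵥ u)
            = ((t + 1 : ℝ) : ℂ) * lam - ((lam:ℂ) * (star w ⬝ᵥ w) - (lam:ℂ) * (star u ⬝ᵥ u)) := by
          push_cast
          ring
        rw [h3]
        exact sub_le_sub_left (sub_le_sub_right hray _) _
      exact le_trans hq step
    have hX : (1 : ℂ) ≤ ((t:ℝ)+1 : ℂ) - star w ⬝ᵥ w + star u ⬝ᵥ u := by
      have h4 : ((t:ℝ):ℂ) + 1 - (t:ℂ) + 0 ≤ ((t:ℝ)+1 : ℂ) - star w ⬝ᵥ w + star u ⬝ᵥ u := by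
        have := add_le_add (sub_le_sub_left hWt (((t:ℝ):ℂ) + 1)) hu0
        simpa using this
      simpa using h4
    have hlt : (lam : ℂ) * (((t:ℝ)+1 : ℂ) - star w ⬝ᵥ w + star u ⬝ᵥ u) ≤ (lam : ℂ) * 1 := by
      apply mul_le_mul_of_nonpos_left hX
      exact_mod_cast le_of_lt hneg
    have : (0:ℂ) < 0 := by
      have hlam0 : (lam : ℂ) < 0 := by exact_mod_cast hneg
      calc (0:ℂ) ≤ _ := hqq
        _ ≤ (lam:ℂ) * 1 := hlt
        _ = (lam:ℂ) := mul_one _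
        _ < 0 := hlam0
    exact lt_irrefl _ this



noncomputable def phi (H L : Matrix n n ℂ) (c : ℝ) : Matrix n n ℂ →ₗ[ℂ] Matrix n n ℂ :=
  (c : ℂ) • LinearMap.id - gen H L

lemma phi_apply (H L : Matrix n n ℂ) (c : ℝ) (ρ : Matrix n n ℂ) :
    phi H L c ρ = (c : ℂ) • ρ - schrodGen H L ρ := rfl

lemma psd_neg_eq_zero {A : Matrix n n ℂ} (h1 : A.PosSemidef) (h2 : (-A).PosSemidef) :
    A = 0 := by
  have hx : ∀ x : n → ℂ, A *ᵥ x = 0 := by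
    intro x
    rw [← h1.dotProduct_mulVec_zero_iff]
    have p1 := h1.dotProduct_mulVec_nonneg x
    have p2 := h2.dotProduct_mulVec_nonneg x
    rw [Matrix.neg_mulVec, dotProduct_neg, le_neg, neg_zero] at p2
    exact le_antisymm p2 p1
  ext i j
  have := congrFun (hx (Pi.single j 1)) i
  simpa using this

lemma phi_conjTranspose (H L : Matrix n n ℂ) (hH : H.IsHermitian) (c : ℝ) (ρ : Matrix n n ℂ) :
    phi H L c ρᴴ = (phi H L c ρ)ᴴ := by
  rw [phi_apply, phi_apply, conjTranspose_sub, ← schrodGen_conjTranspose _ _ _ hH,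
    conjTranspose_smul]
  congr 2
  simp [Complex.star_def, Complex.conj_ofReal]

lemma phi_injective (H L : Matrix n n ℂ) (hH : H.IsHermitian) (c : ℝ)
    (hgood : ∀ ρ : Matrix n n ℂ, ρ.IsHermitian → (phi H L c ρ).PosSemidef → ρ.PosSemidef) :
    Function.Injective (phi H L c) := by
  rw [← LinearMap.ker_eq_bot, LinearMap.ker_eq_bot']
  intro ρ hρ0
  -- Hermitian matrices in the kernel are zero
  have herm_zero : ∀ σ : Matrix n n ℂ, σ.IsHermitian → phi H L c σ = 0 → σ = 0 := by
    intro σ hσ h0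
    have hp : σ.PosSemidef := hgood σ hσ (by rw [h0]; exact Matrix.PosSemidef.zero)
    have hn : (-σ).PosSemidef := by
      apply hgood (-σ) (by simpa [Matrix.IsHermitian] using hσ.neg)
      rw [map_neg, h0, neg_zero]
      exact Matrix.PosSemidef.zero
    exact psd_neg_eq_zero hp hn
  have hρH : phi H L c ρᴴ = 0 := by rw [phi_conjTranspose _ _ hH, hρ0]; simp
  have ha : ρ + ρᴴ = 0 := by
    apply herm_zero _ (by simp [Matrix.IsHermitian, add_comm])
    rw [map_add, hρ0, hρH, add_zero]
  have hb : Complex.I • (ρ - ρᴴ) = 0 := by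
    apply herm_zero
    · simp only [Matrix.IsHermitian, conjTranspose_smul, conjTranspose_sub,
        conjTranspose_conjTranspose, Complex.star_def, Complex.conj_I, neg_smul, smul_sub]
      module
    · rw [_root_.map_smul, map_sub, hρ0, hρH, sub_zero, smul_zero]
  have hb' : ρ - ρᴴ = 0 := by
    have := congrArg (fun M => (-Complex.I) • M) hb
    simpa [smul_smul] using this
  have := congrArg₂ (· + ·) ha hb'
  simp only [add_zero] at this
  have h2 : (2 : ℂ) • ρ = 0 := by
    rw [show (2:ℂ) • ρ = (ρ + ρᴴ) + (ρ - ρᴴ) by module, ha, hb', add_zero]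
  have := congrArg (fun M => (2:ℂ)⁻¹ • M) h2
  simpa [smul_smul] using this



lemma star_single (k : n) (a : ℂ) : (star (Pi.single k a) : n → ℂ) = Pi.single k (star a) := by
  funext l
  rw [Pi.star_apply, Pi.single_apply, Pi.single_apply]
  split <;> simp

lemma psd_smul_real {A : Matrix n n ℂ} (hA : A.PosSemidef) {r : ℝ} (hr : 0 ≤ r) :
    ((r : ℂ) • A).PosSemidef := by
  refine Matrix.PosSemidef.of_dotProduct_mulVec_nonneg ?_ ?_
  · simp only [Matrix.IsHermitian, conjTranspose_smul, hA.1.eq, Complex.star_def,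
      Complex.conj_ofReal]
  · intro x
    rw [Matrix.smul_mulVec, dotProduct_smul, smul_eq_mul]
    exact mul_nonneg (by exact_mod_cast Complex.real_le_real.mpr hr) (hA.dotProduct_mulVec_nonneg x)

lemma psd_sum {N : ℕ} (f : ℕ → Matrix n n ℂ) (hf : ∀ k < N, (f k).PosSemidef) :
    (∑ k ∈ Finset.range N, f k).PosSemidef := by
  induction N with
  | zero => simpa using Matrix.PosSemidef.zero
  | succ N ih =>
    rw [Finset.sum_range_succ]
    exact (ih fun k hk => hf k (Nat.lt_succ_of_lt hk)).add (hf N (Nat.lt_succ_self N))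

lemma state_diag_mem {ρ : Matrix n n ℂ} (h : ρ.PosSemidef) (htr : ρ.trace = 1) (i : n) :
    0 ≤ ρ i i ∧ ρ i i ≤ 1 := by
  have hkk : ∀ k, 0 ≤ ρ k k := by
    intro k
    have h2 := h.dotProduct_mulVec_nonneg (Pi.single k (1:ℂ))
    rw [star_single, star_one, single_dotProduct, one_mul, Matrix.mulVec_single] at h2
    simpa using h2
  refine ⟨hkk i, ?_⟩
  have htr' : ∑ k, ρ k k = 1 := htr
  calc ρ i i ≤ ∑ k, ρ k k :=
        Finset.single_le_sum (fun k _ => hkk k) (Finset.mem_univ i)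
    _ = 1 := htr'

lemma quad_two (ρ : Matrix n n ℂ) (i j : n) (c d : ℂ) :
    star (Pi.single i c + Pi.single j d) ⬝ᵥ ρ *ᵥ (Pi.single i c + Pi.single j d)
      = star c * c * ρ i i + star c * d * ρ i j + star d * c * ρ j i + star d * d * ρ j j := by
  have hstar : (star (Pi.single i c + Pi.single j d) : n → ℂ)
      = (Pi.single i (star c) : n → ℂ) + Pi.single j (star d) := by
    rw [star_add, star_single, star_single]
  have hmv : ρ *ᵥ (Pi.single i c + Pi.single j d)
      = fun k => ρ k i * c + ρ k j * d := by
    rw [Matrix.mulVec_add]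
    funext k
    simp [Matrix.mulVec_single]
    ring
  rw [hstar, hmv, add_dotProduct, single_dotProduct, single_dotProduct]
  ring

lemma state_entry_bound {ρ : Matrix n n ℂ} (h : ρ.PosSemidef) (htr : ρ.trace = 1) (i j : n) :
    ‖ρ i j‖ ≤ 1 := by
  obtain ⟨hii0, hii1⟩ := state_diag_mem h htr i
  obtain ⟨hjj0, hjj1⟩ := state_diag_mem h htr j
  rcases eq_or_ne i j with rfl | hij
  · calc ‖ρ i i‖ ≤ |(ρ i i).re| + |(ρ i i).im| :=
          Complex.norm_le_abs_re_add_abs_im _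
      _ ≤ 1 := by
          have h1 : (ρ i i).im = 0 := ((Complex.le_def.mp hii0).2).symm
          have h2 : 0 ≤ (ρ i i).re := (Complex.le_def.mp hii0).1
          have h3 : (ρ i i).re ≤ 1 := by
            have := (Complex.le_def.mp hii1).1
            simpa using this
          rw [h1]
          simp [abs_of_nonneg h2, h3]
  · set α : ℂ := ρ i j with hα
    rcases eq_or_ne α 0 with h0 | h0
    · simp [h0]
    have habsR : ‖α‖ ≠ 0 := norm_ne_zero_iff.mpr h0
    have habs : (‖α‖ : ℂ) ≠ 0 := by exact_mod_cast habsR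
    set u : ℂ := star α / (‖α‖ : ℂ) with hu
    have hmc : α * star α = ((‖α‖ : ℂ))^2 := by
      rw [Complex.star_def, Complex.mul_conj, Complex.normSq_eq_norm_sq]
      push_cast
      ring
    have hαu : α * u = (‖α‖ : ℂ) := by
      rw [hu, mul_div_assoc', hmc, sq, mul_div_assoc, div_self habs, mul_one]
    have hsu : star u * star α = (‖α‖ : ℂ) := by
      rw [← StarMul.star_mul, hαu, Complex.star_def, Complex.conj_ofReal]
    have habsu : ‖u‖ = 1 := by
      rw [hu, norm_div, Complex.star_def, Complex.norm_conj, Complex.norm_real, Real.norm_eq_abs,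
        abs_of_nonneg (norm_nonneg α), div_self habsR]
    have huu : star u * u = 1 := by
      rw [mul_comm, Complex.star_def, Complex.mul_conj, Complex.normSq_eq_norm_sq, habsu]
      norm_num
    have hji : ρ j i = star α := by
      rw [hα]
      conv_lhs => rw [← h.1.eq]
      rw [Matrix.conjTranspose_apply]
    have hq := h.dotProduct_mulVec_nonneg (Pi.single i (-1) + Pi.single j u)
    rw [quad_two ρ i j] at hq
    have h1u : u * ρ i j = (‖α‖ : ℂ) := by rw [← hα, mul_comm, hαu]
    have key : star (-1:ℂ) * (-1) * ρ i i + star (-1:ℂ) * u * ρ i j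
        + star u * (-1) * ρ j i + star u * u * ρ j j
        = ρ i i + ρ j j - 2 * (‖α‖ : ℂ) := by
      rw [hji, star_neg, star_one, huu]
      linear_combination -h1u - hsu
    rw [key] at hq
    have hq3 : 0 ≤ ρ i i + ρ j j - 2 * (‖α‖ : ℂ) := hq
    have h2a : 2 * (‖α‖ : ℂ) ≤ ρ i i + ρ j j := sub_nonneg.mp hq3
    have h2b : ρ i i + ρ j j ≤ 2 := by
      calc ρ i i + ρ j j ≤ 1 + 1 := add_le_add hii1 hjj1
        _ = 2 := by norm_num
    have h2c : ((2 * ‖α‖ : ℝ) : ℂ) ≤ ((2:ℝ) : ℂ) := by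
      push_cast
      exact le_trans h2a h2b
    have h2d : 2 * ‖α‖ ≤ 2 := Complex.real_le_real.mp h2c
    linarith



lemma isClosed_nonneg_complex : IsClosed {z : ℂ | 0 ≤ z} := by
  have hset : {z : ℂ | 0 ≤ z} = Complex.re ⁻¹' (Set.Ici 0) ∩ Complex.im ⁻¹' {0} := by
    ext z
    simp only [Set.mem_setOf_eq, Set.mem_inter_iff, Set.mem_preimage, Set.mem_Ici,
      Set.mem_singleton_iff, Complex.le_def, Complex.zero_re, Complex.zero_im]
    tauto
  rw [hset]
  exact (isClosed_Ici.preimage Complex.continuous_re).inter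
    (isClosed_singleton.preimage Complex.continuous_im)

lemma isCompact_states :
    IsCompact {ρ : Matrix n n ℂ | ρ.PosSemidef ∧ ρ.trace = 1} := by
  have hK : IsCompact ((Set.univ.pi fun _ : n => Set.univ.pi fun _ : n =>
      Metric.closedBall (0:ℂ) 1) : Set (Matrix n n ℂ)) :=
    isCompact_univ_pi fun _ => isCompact_univ_pi fun _ => isCompact_closedBall 0 1
  refine hK.of_isClosed_subset ?_ ?_
  · have h1 : IsClosed {ρ : Matrix n n ℂ | ρᴴ = ρ} :=
      isClosed_eq (continuous_id.matrix_conjTranspose) continuous_id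
    have h2 : IsClosed {ρ : Matrix n n ℂ | ∀ x : n → ℂ, 0 ≤ star x ⬝ᵥ ρ *ᵥ x} := by
      have hset : {ρ : Matrix n n ℂ | ∀ x : n → ℂ, 0 ≤ star x ⬝ᵥ ρ *ᵥ x}
          = ⋂ x : n → ℂ, (fun ρ : Matrix n n ℂ => star x ⬝ᵥ ρ *ᵥ x) ⁻¹' {z | 0 ≤ z} := by
        ext ρ
        simp
      rw [hset]
      exact isClosed_iInter fun x => isClosed_nonneg_complex.preimage
        (continuous_const.dotProduct (continuous_id.matrix_mulVec continuous_const))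
    have h3 : IsClosed {ρ : Matrix n n ℂ | ρ.trace = 1} :=
      isClosed_eq (continuous_id.matrix_trace) continuous_const
    have hset2 : {ρ : Matrix n n ℂ | ρ.PosSemidef ∧ ρ.trace = 1}
        = ({ρ : Matrix n n ℂ | ρᴴ = ρ} ∩ {ρ | ∀ x, 0 ≤ star x ⬝ᵥ ρ *ᵥ x}) ∩ {ρ | ρ.trace = 1} := by
      ext ρ
      simp only [Set.mem_setOf_eq, Set.mem_inter_iff, Matrix.posSemidef_iff_dotProduct_mulVec, Matrix.IsHermitian]
    rw [hset2]
    exact (h1.inter h2).inter h3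
  · intro ρ hρ
    intro i _
    intro j _
    simp only [Metric.mem_closedBall, dist_zero_right]
    exact state_entry_bound hρ.1 hρ.2 i j

end InvariantStateAux

/-- every finite-dimensional quantum Markov system admits an invariant state. -/
theorem exists_invariant_state
    [Fintype n] [DecidableEq n] [Nonempty n]
    (H L : Matrix n n ℂ) (hH : H.IsHermitian) :
    ∃ ρ : Matrix n n ℂ, ρ.PosSemidef ∧ ρ.trace = 1 ∧ schrodGen H L ρ = 0 := by
  classical
  obtain ⟨c, hc0, hgood'⟩ := exists_good_const H L
  have hgood : ∀ ρ : Matrix n n ℂ, ρ.IsHermitian → (phi H L c ρ).PosSemidef → ρ.PosSemidef := by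
    intro ρ hρ hp
    exact hgood' ρ hρ (by rwa [← phi_apply])
  have inj := phi_injective H L hH c hgood
  have surj := LinearMap.injective_iff_surjective.mp inj
  let e : Matrix n n ℂ ≃ₗ[ℂ] Matrix n n ℂ := LinearEquiv.ofBijective (phi H L c) ⟨inj, surj⟩
  let Tlin : Matrix n n ℂ →ₗ[ℂ] Matrix n n ℂ := (c : ℂ) • (e.symm : Matrix n n ℂ →ₗ[ℂ] Matrix n n ℂ)
  set T : Matrix n n ℂ → Matrix n n ℂ := fun ρ => (c:ℂ) • (e.symm ρ) with hTdef
  set S : Set (Matrix n n ℂ) := {ρ | ρ.PosSemidef ∧ ρ.trace = 1} with hSdef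
  have he_apply : ∀ σ : Matrix n n ℂ, e σ = phi H L c σ := fun _ => rfl
  have hTS : ∀ ρ ∈ S, T ρ ∈ S := by
    intro ρ hρ
    set σ := e.symm ρ with hσdef
    have hφσ : phi H L c σ = ρ := by
      rw [← he_apply]
      exact e.apply_symm_apply ρ
    have hσH : σ.IsHermitian := by
      have : phi H L c σᴴ = phi H L c σ := by
        rw [phi_conjTranspose _ _ hH, hφσ, hρ.1.1]
      exact inj this
    have hσP : σ.PosSemidef := hgood σ hσH (by rw [hφσ]; exact hρ.1)
    constructor
    · exact psd_smul_real hσP hc0.le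
    · have htσ : (phi H L c σ).trace = (c:ℂ) * σ.trace := by
        rw [phi_apply, trace_sub, trace_smul, trace_schrodGen, sub_zero, smul_eq_mul]
      have h1 : (c:ℂ) * σ.trace = 1 := by rw [← htσ, hφσ]; exact hρ.2
      rw [trace_smul, smul_eq_mul, h1]
  -- initial state
  have hcard : (0:ℝ) < (Fintype.card n : ℝ) := by
    exact_mod_cast Fintype.card_pos
  set ρ0 : Matrix n n ℂ := (((Fintype.card n : ℝ)⁻¹ : ℝ) : ℂ) • 1 with hρ0def
  have hρ0S : ρ0 ∈ S := by
    constructor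
    · exact psd_smul_real Matrix.PosSemidef.one (inv_nonneg.mpr hcard.le)
    · rw [hρ0def, trace_smul, trace_one, smul_eq_mul]
      push_cast
      field_simp
  set g : ℕ → Matrix n n ℂ := fun k => T^[k] ρ0 with hgdef
  have hgS : ∀ k, g k ∈ S := by
    intro k
    induction k with
    | zero => exact hρ0S
    | succ k ih =>
      have : g (k+1) = T (g k) := Function.iterate_succ_apply' T k ρ0
      rw [this]
      exact hTS _ ih
  set rr : ℕ → ℝ := fun N => ((N:ℝ)+1)⁻¹ with hrrdef
  have hrr0 : ∀ N, 0 ≤ rr N := fun N => inv_nonneg.mpr (by positivity)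
  set seq : ℕ → Matrix n n ℂ := fun N => ((rr N : ℝ) : ℂ) • ∑ k ∈ Finset.range (N+1), g k
    with hseqdef
  have hseqS : ∀ N, seq N ∈ S := by
    intro N
    constructor
    · exact psd_smul_real (psd_sum g fun k _ => (hgS k).1) (hrr0 N)
    · rw [hseqdef]
      simp only [trace_smul, Matrix.trace_sum, smul_eq_mul]
      rw [Finset.sum_congr rfl fun k _ => (hgS k).2]
      simp only [Finset.sum_const, Finset.card_range, nsmul_eq_mul, mul_one]
      rw [hrrdef]
      push_cast
      rw [inv_mul_cancel₀ (by positivity)]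
  haveI : FirstCountableTopology (Matrix n n ℂ) :=
    (inferInstance : FirstCountableTopology (n → n → ℂ))
  obtain ⟨ρs, hρsS, φ, hφ, hconv⟩ := isCompact_states.tendsto_subseq hseqS
  have hTcont : Continuous T := by
    have : Continuous Tlin := Tlin.continuous_of_finiteDimensional
    exact this
  have hdiff : ∀ N, T (seq N) - seq N = ((rr N : ℝ) : ℂ) • (g (N+1) - g 0) := by
    intro N
    have hTseq : T (seq N) = ((rr N : ℝ) : ℂ) • ∑ k ∈ Finset.range (N+1), g (k+1) := by
      show Tlin (seq N) = _
      rw [hseqdef]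
      rw [_root_.map_smul, map_sum]
      congr 1
      refine Finset.sum_congr rfl fun k _ => ?_
      show T (g k) = g (k+1)
      exact (Function.iterate_succ_apply' T k ρ0).symm
    rw [hTseq, hseqdef, ← smul_sub]
    congr 1
    rw [← Finset.sum_sub_distrib]
    exact Finset.sum_range_sub g (N+1)
  have htend0 : Filter.Tendsto (fun N => T (seq N) - seq N) Filter.atTop (nhds 0) := by
    simp only [hdiff]
    apply tendsto_pi_nhds.mpr
    intro i
    rw [tendsto_pi_nhds]
    intro j
    have hb : ∀ N, ‖(((rr N : ℝ) : ℂ) • (g (N+1) - g 0)) i j‖ ≤ 2 * rr N := by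
      intro N
      have h1 : ‖(g (N+1) - g 0) i j‖ ≤ 2 := by
        have e1 := state_entry_bound (hgS (N+1)).1 (hgS (N+1)).2 i j
        have e2 := state_entry_bound (hgS 0).1 (hgS 0).2 i j
        calc ‖(g (N+1) - g 0) i j‖ = ‖g (N+1) i j - g 0 i j‖ := by rw [Matrix.sub_apply]
          _ ≤ ‖g (N+1) i j‖ + ‖g 0 i j‖ := norm_sub_le _ _
          _ ≤ 1 + 1 := by
              exact add_le_add e1 e2
          _ = 2 := by norm_num
      calc ‖(((rr N : ℝ) : ℂ) • (g (N+1) - g 0)) i j‖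
          = ‖((rr N : ℝ) : ℂ)‖ * ‖(g (N+1) - g 0) i j‖ := by
            rw [Matrix.smul_apply, norm_smul]
        _ ≤ ‖((rr N : ℝ) : ℂ)‖ * 2 := by
            apply mul_le_mul_of_nonneg_left h1 (norm_nonneg _)
        _ = 2 * rr N := by
            rw [Complex.norm_real, Real.norm_eq_abs, abs_of_nonneg (hrr0 N)]
            ring
    have hlim : Filter.Tendsto (fun N : ℕ => 2 * rr N) Filter.atTop (nhds 0) := by
      have := tendsto_one_div_add_atTop_nhds_zero_nat.const_mul (2:ℝ)
      simpa [hrrdef, one_div] using this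
    have := squeeze_zero_norm hb hlim
    simpa using this
  have l1 : Filter.Tendsto (fun jj => T (seq (φ jj)) - seq (φ jj)) Filter.atTop
      (nhds (T ρs - ρs)) := by
    exact Filter.Tendsto.sub ((hTcont.tendsto ρs).comp hconv) hconv
  have l2 : Filter.Tendsto (fun jj => T (seq (φ jj)) - seq (φ jj)) Filter.atTop (nhds 0) :=
    htend0.comp hφ.tendsto_atTop
  have heq : T ρs - ρs = 0 := tendsto_nhds_unique l1 l2
  have hfix : T ρs = ρs := by rwa [sub_eq_zero] at heq
  have hphi : phi H L c ρs = (c:ℂ) • ρs := by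
    have h1 : phi H L c (T ρs) = phi H L c ρs := by rw [hfix]
    have h2 : phi H L c (T ρs) = (c:ℂ) • phi H L c (e.symm ρs) := by
      rw [hTdef]
      exact map_smul (phi H L c) _ _
    have h3 : phi H L c (e.symm ρs) = ρs := by
      rw [← he_apply]
      exact e.apply_symm_apply ρs
    rw [h2, h3] at h1
    exact h1.symm
  have hzero : schrodGen H L ρs = 0 := by
    have := hphi
    rw [phi_apply] at this
    have h4 : (c:ℂ) • ρs - schrodGen H L ρs = (c:ℂ) • ρs := this
    exact sub_eq_self.mp h4
  exact ⟨ρs, hρsS.1, hρsS.2, hzero⟩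
end

section
/- Let ρ₀ be a state with trajectory ρ_t = exp(t·𝓛)(ρ₀), let (T_k) be a sequence of positive reals with T_k → ∞, and suppose the Cesàro averages (1/T_k)·∫₀^{T_k} ρ_t dt converge to a matrix σ as k → ∞. Then σ is an invariant state: σ is positive semidefinite, has trace 1, and 𝓛(σ) = 0. -/
open Matrix ComplexOrder

attribute [local instance] Matrix.linftyOpNormedAddCommGroup Matrix.linftyOpNormedSpace

variable {n : Type*}

/-- The Schrödinger (predual) generator
`𝓛(ρ) = -i·(H*ρ - ρ*H) + L*ρ*Lᴴ - (1/2)·(Lᴴ*L*ρ + ρ*Lᴴ*L)`, bundled as a linear map. -/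
noncomputable def schrodGenLM [Fintype n] [DecidableEq n] (H L : Matrix n n ℂ) :
    Matrix n n ℂ →ₗ[ℂ] Matrix n n ℂ :=
  -Complex.I • (LinearMap.mulLeft ℂ H - LinearMap.mulRight ℂ H)
    + (LinearMap.mulRight ℂ Lᴴ).comp (LinearMap.mulLeft ℂ L)
    - (1/2 : ℂ) • (LinearMap.mulLeft ℂ (Lᴴ * L) + LinearMap.mulRight ℂ (Lᴴ * L))

lemma schrodGenLM_apply [Fintype n] [DecidableEq n] (H L ρ : Matrix n n ℂ) :
    schrodGenLM H L ρ =
      -Complex.I • (H * ρ - ρ * H) + L * ρ * Lᴴ - (1/2 : ℂ) • (Lᴴ * L * ρ + ρ * (Lᴴ * L)) := by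
  simp [schrodGenLM, LinearMap.mulLeft, LinearMap.mulRight, mul_assoc]

/-- The trajectory `ρ_t = exp (t • 𝓛) ρ₀`, where `𝓛` is regarded as a continuous linear
endomorphism of `Matrix n n ℂ`. -/
noncomputable def traj [Fintype n] [DecidableEq n] (H L ρ₀ : Matrix n n ℂ) (t : ℝ) :
    Matrix n n ℂ :=
  haveI : IsTopologicalRing (Matrix n n ℂ →L[ℂ] Matrix n n ℂ) :=
    @NonUnitalSeminormedRing.toIsTopologicalRing _
      ContinuousLinearMap.toNormedRing.toNonUnitalNormedRing.toNonUnitalSeminormedRing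
  NormedSpace.exp (t • (LinearMap.toContinuousLinearMap (schrodGenLM H L))) ρ₀


open NormedSpace MeasureTheory intervalIntegral
open scoped NNReal

attribute [local instance] Matrix.linftyOpNormedRing Matrix.linftyOpNormedAlgebra

section Inst

noncomputable abbrev matTop [Fintype n] : TopologicalSpace (Matrix n n ℂ) :=
  (Matrix.linftyOpNormedAddCommGroup : NormedAddCommGroup (Matrix n n ℂ)).toUniformSpace.toTopologicalSpace

noncomputable abbrev matUnif [Fintype n] : UniformSpace (Matrix n n ℂ) :=
  (Matrix.linftyOpNormedAddCommGroup : NormedAddCommGroup (Matrix n n ℂ)).toUniformSpace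

attribute [local instance] matTop matUnif

noncomputable instance clmMatNormedAlgebraRat [Fintype n] [DecidableEq n] :
    NormedAlgebra ℚ (Matrix n n ℂ →L[ℂ] Matrix n n ℂ) :=
  NormedAlgebra.restrictScalars ℚ ℂ _

section Aux
variable [Fintype n] [DecidableEq n]

noncomputable def lmulCLM (M : Matrix n n ℂ) : Matrix n n ℂ →L[ℂ] Matrix n n ℂ :=
  (LinearMap.mulLeft ℂ M).toContinuousLinearMap

noncomputable def rmulCLM (M : Matrix n n ℂ) : Matrix n n ℂ →L[ℂ] Matrix n n ℂ :=
  (LinearMap.mulRight ℂ M).toContinuousLinearMap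

@[simp] lemma lmulCLM_apply (M X : Matrix n n ℂ) : lmulCLM M X = M * X := rfl
@[simp] lemma rmulCLM_apply (M X : Matrix n n ℂ) : rmulCLM M X = X * M := rfl

lemma lmulCLM_pow (M : Matrix n n ℂ) (k : ℕ) : (lmulCLM M) ^ k = lmulCLM (M ^ k) := by
  induction k with
  | zero => ext X; simp [Matrix.one_mul]
  | succ k ih => ext X; simp [pow_succ, ih, ContinuousLinearMap.mul_apply, mul_assoc]

lemma rmulCLM_pow (M : Matrix n n ℂ) (k : ℕ) : (rmulCLM M) ^ k = rmulCLM (M ^ k) := by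
  induction k with
  | zero => ext X; simp [Matrix.mul_one]
  | succ k ih =>
      ext X
      simp only [pow_succ, ih, ContinuousLinearMap.mul_apply, rmulCLM_apply, mul_assoc,
        ((Commute.refl M).pow_left k).eq]

lemma exp_lmulCLM (M : Matrix n n ℂ) (X : Matrix n n ℂ) :
    exp (lmulCLM M) X = exp M * X := by
  rw [exp_eq_tsum ℂ, exp_eq_tsum ℂ]
  have h1 : Summable fun k : ℕ => ((k.factorial : ℂ))⁻¹ • (lmulCLM M) ^ k := expSeries_summable' _
  have h2 : Summable fun k : ℕ => ((k.factorial : ℂ))⁻¹ • M ^ k := expSeries_summable' M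
  calc (∑' k : ℕ, ((k.factorial : ℂ))⁻¹ • (lmulCLM M) ^ k) X
      = ∑' k : ℕ, (((k.factorial : ℂ))⁻¹ • (lmulCLM M) ^ k) X := by
        exact (ContinuousLinearMap.apply ℂ (Matrix n n ℂ) X).map_tsum h1
    _ = ∑' k : ℕ, ((k.factorial : ℂ))⁻¹ • (M ^ k * X) := by
        simp [lmulCLM_pow]
    _ = ∑' k : ℕ, (rmulCLM X) (((k.factorial : ℂ))⁻¹ • M ^ k) := by
        congr 1; funext k; simp [smul_mul_assoc]
    _ = (∑' k : ℕ, ((k.factorial : ℂ))⁻¹ • M ^ k) * X := by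
        exact ((rmulCLM X).map_tsum h2).symm

lemma exp_rmulCLM (M : Matrix n n ℂ) (X : Matrix n n ℂ) :
    exp (rmulCLM M) X = X * exp M := by
  rw [exp_eq_tsum ℂ, exp_eq_tsum ℂ]
  have h1 : Summable fun k : ℕ => ((k.factorial : ℂ))⁻¹ • (rmulCLM M) ^ k := expSeries_summable' _
  have h2 : Summable fun k : ℕ => ((k.factorial : ℂ))⁻¹ • M ^ k := expSeries_summable' M
  calc (∑' k : ℕ, ((k.factorial : ℂ))⁻¹ • (rmulCLM M) ^ k) X
      = ∑' k : ℕ, (((k.factorial : ℂ))⁻¹ • (rmulCLM M) ^ k) X := by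
        exact (ContinuousLinearMap.apply ℂ (Matrix n n ℂ) X).map_tsum h1
    _ = ∑' k : ℕ, ((k.factorial : ℂ))⁻¹ • (X * M ^ k) := by
        simp [rmulCLM_pow]
    _ = ∑' k : ℕ, (lmulCLM X) (((k.factorial : ℂ))⁻¹ • M ^ k) := by
        congr 1; funext k; simp [mul_smul_comm]
    _ = X * (∑' k : ℕ, ((k.factorial : ℂ))⁻¹ • M ^ k) := by
        exact ((lmulCLM X).map_tsum h2).symm

noncomputable def Gmat (H L : Matrix n n ℂ) : Matrix n n ℂ :=
  -Complex.I • H - (1/2 : ℂ) • (Lᴴ * L)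

noncomputable def aCLM (H L : Matrix n n ℂ) : Matrix n n ℂ →L[ℂ] Matrix n n ℂ :=
  lmulCLM (Gmat H L) + rmulCLM ((Gmat H L)ᴴ)

noncomputable def bCLM (L : Matrix n n ℂ) : Matrix n n ℂ →L[ℂ] Matrix n n ℂ :=
  lmulCLM L * rmulCLM Lᴴ

@[simp] lemma bCLM_apply (L ρ : Matrix n n ℂ) : bCLM L ρ = L * ρ * Lᴴ := by
  simp [bCLM, ContinuousLinearMap.mul_apply, mul_assoc]

lemma Gmat_conjTranspose {H : Matrix n n ℂ} (hH : H.IsHermitian) (L : Matrix n n ℂ) :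
    (Gmat H L)ᴴ = Complex.I • H - (1/2 : ℂ) • (Lᴴ * L) := by
  simp [Gmat, Matrix.conjTranspose_smul, Matrix.conjTranspose_sub, hH.eq, Complex.conj_I,
    Matrix.conjTranspose_mul, mul_assoc]

lemma aCLM_add_bCLM {H : Matrix n n ℂ} (hH : H.IsHermitian) (L : Matrix n n ℂ) :
    aCLM H L + bCLM L = (schrodGenLM H L).toContinuousLinearMap := by
  apply ContinuousLinearMap.ext
  intro ρ
  have h2 : (schrodGenLM H L).toContinuousLinearMap ρ = schrodGenLM H L ρ := rfl
  have key : (Gmat H L) * ρ + ρ * ((Gmat H L)ᴴ) + L * (ρ * Lᴴ) = schrodGenLM H L ρ := by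
    rw [schrodGenLM_apply, Gmat_conjTranspose hH]
    simp only [Gmat, Matrix.sub_mul, Matrix.mul_sub, Matrix.smul_mul, Matrix.mul_smul,
      smul_sub, smul_add, mul_assoc]
    module
  rw [ContinuousLinearMap.add_apply, h2, ← key]
  simp [aCLM, bCLM, ContinuousLinearMap.mul_apply, mul_assoc]

lemma smul_lmulCLM (z : ℂ) (M : Matrix n n ℂ) : lmulCLM (z • M) = z • lmulCLM M := by
  ext X; simp [Matrix.smul_mul]
lemma smul_rmulCLM (z : ℂ) (M : Matrix n n ℂ) : rmulCLM (z • M) = z • rmulCLM M := by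
  ext X; simp [Matrix.mul_smul]

lemma exp_aCLM_apply (H L : Matrix n n ℂ) (z : ℂ) (ρ : Matrix n n ℂ) :
    exp (z • aCLM H L) ρ = exp (z • Gmat H L) * ρ * exp (z • (Gmat H L)ᴴ) := by
  have hz : z • aCLM H L = lmulCLM (z • Gmat H L) + rmulCLM (z • (Gmat H L)ᴴ) := by
    simp [aCLM, smul_lmulCLM, smul_rmulCLM, smul_add]
  have hcomm : Commute (lmulCLM (z • Gmat H L)) (rmulCLM (z • (Gmat H L)ᴴ)) := by
    apply ContinuousLinearMap.ext
    intro X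
    simp [ContinuousLinearMap.mul_apply, mul_assoc]
  rw [hz, exp_add_of_commute hcomm, ContinuousLinearMap.mul_apply, exp_rmulCLM, exp_lmulCLM,
    mul_assoc]

lemma exp_aCLM_psd {H : Matrix n n ℂ} (hH : H.IsHermitian) (L : Matrix n n ℂ) (t : ℝ)
    {ρ : Matrix n n ℂ} (hρ : ρ.PosSemidef) :
    (exp ((t : ℂ) • aCLM H L) ρ).PosSemidef := by
  rw [exp_aCLM_apply]
  have h1 : ((t : ℂ) • Gmat H L)ᴴ = (t : ℂ) • (Gmat H L)ᴴ := by
    simp [Matrix.conjTranspose_smul, Complex.star_def, Complex.conj_ofReal]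
  rw [← h1, show exp ((t : ℂ) • Gmat H L)ᴴ = (exp ((t : ℂ) • Gmat H L))ᴴ from
    Matrix.exp_conjTranspose _]
  exact hρ.mul_mul_conjTranspose_same _

lemma bCLM_psd (L : Matrix n n ℂ) {ρ : Matrix n n ℂ} (hρ : ρ.PosSemidef) :
    (bCLM L ρ).PosSemidef := by
  rw [bCLM_apply]; exact hρ.mul_mul_conjTranspose_same _

end Aux

section BanachAlg
variable {A : Type*} [NormedRing A] [NormedAlgebra ℂ A] [CompleteSpace A]

noncomputable def eR (x : A) (t : ℝ) : A := exp ((t : ℂ) • x)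

@[simp] lemma eR_zero (x : A) : eR x 0 = 1 := by simp [eR, exp_zero]

lemma hasDerivAt_eR (x : A) (t : ℝ) : HasDerivAt (eR x) (x * eR x t) t := by
  have h := hasDerivAt_exp_smul_const' (𝕂 := ℂ) x (t : ℂ)
  have h' := ((h.hasFDerivAt.restrictScalars ℝ).comp t Complex.ofRealCLM.hasFDerivAt).hasDerivAt
  rw [show eR x = (fun u : ℂ => exp (u • x)) ∘ Complex.ofReal from rfl]
  simpa [eR] using h'

lemma eR_continuous (x : A) : Continuous (eR x) := by
  letI : NormedAlgebra ℚ A := NormedAlgebra.restrictScalars ℚ ℂ A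
  exact exp_continuous.comp ((Complex.continuous_ofReal).smul continuous_const)

lemma eR_mul_eR_neg (x : A) (t : ℝ) : eR x t * eR (-x) t = 1 := by
  letI : NormedAlgebra ℚ A := NormedAlgebra.restrictScalars ℚ ℂ A
  have hc : Commute ((t : ℂ) • x) ((t : ℂ) • (-x)) :=
    ((Commute.refl x).neg_right.smul_left _).smul_right _
  rw [eR, eR, ← exp_add_of_commute hc]
  simp [exp_zero]

lemma duhamel (a b : A) (t : ℝ) :
    eR (a + b) t = eR a t + eR a t * ∫ s in (0:ℝ)..t, eR (-a) s * b * eR (a + b) s := by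
  have hF : ∀ u : ℝ, HasDerivAt (fun v : ℝ => eR (-a) v * eR (a + b) v)
      (eR (-a) u * b * eR (a + b) u) u := by
    intro u
    have h1 := hasDerivAt_eR (-a) u
    have h2 := hasDerivAt_eR (a + b) u
    have h := h1.mul h2
    convert h using 1
    · rfl
    have hcomm : a * eR (-a) u = eR (-a) u * a := by
      have : Commute a ((u : ℂ) • (-a)) := ((Commute.refl a).neg_right).smul_right _
      exact this.exp_right.eq
    rw [neg_mul, hcomm]
    noncomm_ring
  have hcont : Continuous fun s : ℝ => eR (-a) s * b * eR (a + b) s :=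
    ((eR_continuous _).mul continuous_const).mul (eR_continuous _)
  have hFTC := intervalIntegral.integral_eq_sub_of_hasDerivAt
      (fun s _ => hF s) (hcont.intervalIntegrable 0 t)
  rw [hFTC]
  simp only [eR_zero, one_mul]
  rw [mul_sub, ← mul_assoc, eR_mul_eR_neg, one_mul, mul_one]
  abel

noncomputable def picard (a b : A) : ℕ → ℝ → A
  | 0 => fun t => eR a t
  | (k+1) => fun t => eR a t + eR a t * ∫ s in (0:ℝ)..t, eR (-a) s * b * picard a b k s

lemma picard_continuous (a b : A) (k : ℕ) : Continuous (picard a b k) := by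
  induction k with
  | zero => exact eR_continuous a
  | succ k ih =>
      refine (eR_continuous a).add ((eR_continuous a).mul ?_)
      exact intervalIntegral.continuous_primitive
        (fun c d => (((eR_continuous _).mul continuous_const).mul ih).intervalIntegrable c d) 0

lemma picard_diff (a b : A) (k : ℕ) (t : ℝ) :
    eR (a + b) t - picard a b (k+1) t
      = eR a t * ∫ s in (0:ℝ)..t, eR (-a) s * b * (eR (a + b) s - picard a b k s) := by
  have hint1 : IntervalIntegrable (fun s : ℝ => eR (-a) s * b * eR (a + b) s)
      MeasureTheory.volume 0 t :=
    (((eR_continuous _).mul continuous_const).mul (eR_continuous _)).intervalIntegrable 0 t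
  have hint2 : IntervalIntegrable (fun s : ℝ => eR (-a) s * b * picard a b k s)
      MeasureTheory.volume 0 t :=
    (((eR_continuous _).mul continuous_const).mul (picard_continuous a b k)).intervalIntegrable 0 t
  calc eR (a + b) t - picard a b (k+1) t
      = eR a t * ((∫ s in (0:ℝ)..t, eR (-a) s * b * eR (a + b) s)
          - ∫ s in (0:ℝ)..t, eR (-a) s * b * picard a b k s) := by
        rw [duhamel a b t]
        show _ + _ * _ - (_ + _ * _) = _
        rw [mul_sub]; abel
    _ = eR a t * ∫ s in (0:ℝ)..t,
          (eR (-a) s * b * eR (a + b) s - eR (-a) s * b * picard a b k s) := by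
        rw [intervalIntegral.integral_sub hint1 hint2]
    _ = _ := by
        congr 1
        apply intervalIntegral.integral_congr
        intro s _
        exact (mul_sub _ _ _).symm
lemma picard_tendsto (a b : A) {t : ℝ} (ht : 0 ≤ t) :
    Filter.Tendsto (fun k => picard a b k t) Filter.atTop (nhds (eR (a + b) t)) := by
  -- the error terms
  set D : ℕ → ℝ → A := fun k s => eR (a + b) s - picard a b k s with hD
  -- a uniform constant
  obtain ⟨u, hu, hmax'⟩ := isCompact_Icc.exists_isMaxOn (Set.nonempty_Icc.2 ht)
    (((((eR_continuous (-a)).norm.mul continuous_const).max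
      (eR_continuous a).norm).max
      (((eR_continuous (a+b)).sub (picard_continuous a b 0)).norm.add
        continuous_const)).continuousOn (s := Set.Icc 0 t))
  have hmax := hmax'
  rw [isMaxOn_iff] at hmax
  set C : ℝ := max (‖eR (-a) u‖ * ‖b‖) ‖eR a u‖ ⊔ (‖D 0 u‖ + 1) with hC
  have hC1 : 1 ≤ C := le_max_of_le_right (le_add_of_nonneg_left (norm_nonneg _))
  have hCb : ∀ s ∈ Set.Icc 0 t, ‖eR (-a) s‖ * ‖b‖ ≤ C := fun s hs =>
    le_trans (le_trans (le_max_left _ _) (le_max_left _ _)) (hmax s hs)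
  have hCa : ∀ s ∈ Set.Icc 0 t, ‖eR a s‖ ≤ C := fun s hs =>
    le_trans (le_trans (le_max_right _ _) (le_max_left _ _)) (hmax s hs)
  have hC0 : ∀ s ∈ Set.Icc 0 t, ‖D 0 s‖ ≤ C := fun s hs =>
    le_trans (le_trans (le_add_of_nonneg_right zero_le_one) (le_max_right _ _)) (hmax s hs)
  -- main estimate
  have hbound : ∀ k, ∀ t' ∈ Set.Icc (0:ℝ) t,
      ‖D k t'‖ ≤ C ^ (2*k+1) * t' ^ k / k.factorial := by
    intro k
    induction k with
    | zero => intro t' ht'; simpa using hC0 t' ht'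
    | succ k ih =>
        intro t' ht'
        have ht'0 : (0:ℝ) ≤ t' := ht'.1
        have hrec : D (k+1) t' = eR a t' * ∫ s in (0:ℝ)..t', eR (-a) s * b * D k s :=
          picard_diff a b k t'
        have hgint : IntervalIntegrable (fun s : ℝ => C ^ (2*k+2) / k.factorial * s ^ k)
            MeasureTheory.volume 0 t' :=
          (continuous_const.mul (continuous_pow k)).intervalIntegrable 0 t'
        have hnorm : ‖∫ s in (0:ℝ)..t', eR (-a) s * b * D k s‖
            ≤ |∫ s in (0:ℝ)..t', C ^ (2*k+2) / k.factorial * s ^ k| := by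
          apply intervalIntegral.norm_integral_le_abs_of_norm_le _ hgint
          filter_upwards [MeasureTheory.ae_restrict_mem measurableSet_uIoc] with s hs
          rw [Set.uIoc_of_le ht'0] at hs
          have hs0 : (0:ℝ) ≤ s := le_of_lt hs.1
          have hs' : s ∈ Set.Icc (0:ℝ) t := ⟨hs0, le_trans hs.2 ht'.2⟩
          have hC0' : (0:ℝ) ≤ C := le_trans zero_le_one hC1
          calc ‖eR (-a) s * b * D k s‖ ≤ ‖eR (-a) s * b‖ * ‖D k s‖ := norm_mul_le _ _
            _ ≤ (‖eR (-a) s‖ * ‖b‖) * (C ^ (2*k+1) * s ^ k / k.factorial) := by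
                apply mul_le_mul (norm_mul_le _ _) (ih s hs') (norm_nonneg _)
                exact mul_nonneg (norm_nonneg _) (norm_nonneg _)
            _ ≤ C * (C ^ (2*k+1) * s ^ k / k.factorial) := by
                apply mul_le_mul_of_nonneg_right (hCb s hs')
                exact div_nonneg (mul_nonneg (pow_nonneg hC0' _) (pow_nonneg hs0 _))
                  (Nat.cast_nonneg _)
            _ = C ^ (2*k+2) / k.factorial * s ^ k := by ring
        have hval : (∫ s in (0:ℝ)..t', C ^ (2*k+2) / k.factorial * s ^ k)
            = C ^ (2*k+2) / k.factorial * (t' ^ (k+1) / (k+1)) := by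
          rw [intervalIntegral.integral_const_mul, integral_pow]
          simp
        rw [hrec]
        calc ‖eR a t' * ∫ s in (0:ℝ)..t', eR (-a) s * b * D k s‖
            ≤ ‖eR a t'‖ * ‖∫ s in (0:ℝ)..t', eR (-a) s * b * D k s‖ := norm_mul_le _ _
          _ ≤ C * |∫ s in (0:ℝ)..t', C ^ (2*k+2) / k.factorial * s ^ k| := by
              apply mul_le_mul (hCa t' ht') hnorm (norm_nonneg _)
              exact le_trans zero_le_one hC1
          _ = C * (C ^ (2*k+2) / k.factorial * (t' ^ (k+1) / (k+1))) := by
              rw [hval, abs_of_nonneg]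
              positivity
          _ = C ^ (2*(k+1)+1) * t' ^ (k+1) / (k+1).factorial := by
              have hkfac : (k.factorial : ℝ) ≠ 0 := Nat.cast_ne_zero.2 k.factorial_ne_zero
              have hk1 : ((k:ℝ) + 1) ≠ 0 := by positivity
              rw [Nat.factorial_succ]
              push_cast
              field_simp
              ring
  -- conclude
  have hzero : Filter.Tendsto (fun k => D k t) Filter.atTop (nhds 0) := by
    have hb2 : ∀ k : ℕ, ‖D k t‖ ≤ C * ((C^2*t)^k / k.factorial) := by
      intro k
      calc ‖D k t‖ ≤ C ^ (2*k+1) * t ^ k / k.factorial := hbound k t ⟨ht, le_refl t⟩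
        _ = C * ((C^2*t)^k / k.factorial) := by rw [mul_pow, ← pow_mul]; ring
    have h2 : Filter.Tendsto (fun k : ℕ => C * ((C^2*t)^k / k.factorial))
        Filter.atTop (nhds (C*0)) :=
      (FloorSemiring.tendsto_pow_div_factorial_atTop (C^2*t)).const_mul C
    rw [mul_zero] at h2
    exact squeeze_zero_norm hb2 h2
  have h3 := hzero.const_sub (eR (a+b) t)
  simp only [hD, sub_sub_cancel, sub_zero] at h3
  exact h3

end BanachAlg

section Aux2
variable [Fintype n] [DecidableEq n]

/-- conjTranspose as a real-linear continuous map -/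
noncomputable def ctCLM : Matrix n n ℂ →L[ℝ] Matrix n n ℂ :=
  LinearMap.toContinuousLinearMap
    { toFun := fun M => Mᴴ
      map_add' := fun M N => Matrix.conjTranspose_add M N
      map_smul' := fun r M => by
        ext i j
        simp [Matrix.conjTranspose_apply, Complex.real_smul, _root_.map_mul, Complex.conj_ofReal] }

@[simp] lemma ctCLM_apply (M : Matrix n n ℂ) : (ctCLM M) = Mᴴ := rfl

/-- quadratic form as a continuous linear map -/
noncomputable def qCLM (x : n → ℂ) : Matrix n n ℂ →L[ℂ] ℂ :=
  LinearMap.toContinuousLinearMap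
    { toFun := fun M => dotProduct (star x) (M *ᵥ x)
      map_add' := fun M N => by simp [Matrix.add_mulVec, dotProduct_add]
      map_smul' := fun r M => by simp [Matrix.smul_mulVec, dotProduct_smul] }

@[simp] lemma qCLM_apply (x : n → ℂ) (M : Matrix n n ℂ) :
    qCLM x M = dotProduct (star x) (M *ᵥ x) := rfl

lemma posSemidef_of_tendsto {f : ℕ → Matrix n n ℂ} {M : Matrix n n ℂ}
    (h : Filter.Tendsto f Filter.atTop (nhds M)) (hf : ∀ k, (f k).PosSemidef) :
    M.PosSemidef := by
  rw [Matrix.posSemidef_iff_dotProduct_mulVec]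
  constructor
  · have h1 : Filter.Tendsto (fun k => (f k)ᴴ) Filter.atTop (nhds Mᴴ) :=
      ((ctCLM (n := n)).continuous.tendsto M).comp h
    have h2 : (fun k => (f k)ᴴ) = f := funext fun k => (hf k).1
    rw [h2] at h1
    exact tendsto_nhds_unique h1 h
  · intro x
    have hq : Filter.Tendsto (fun k => qCLM x (f k)) Filter.atTop (nhds (qCLM x M)) :=
      ((qCLM x).continuous.tendsto M).comp h
    rw [Complex.le_def]
    constructor
    · have hre : Filter.Tendsto (fun k => (qCLM x (f k)).re) Filter.atTop
          (nhds ((qCLM x M).re)) := (Complex.continuous_re.tendsto _).comp hq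
      have : ∀ k, 0 ≤ (qCLM x (f k)).re := by
        intro k
        have := (hf k).dotProduct_mulVec_nonneg x
        rw [Complex.le_def] at this
        simpa using this.1
      exact ge_of_tendsto hre (Filter.Eventually.of_forall this)
    · have him : Filter.Tendsto (fun k => (qCLM x (f k)).im) Filter.atTop
          (nhds ((qCLM x M).im)) := (Complex.continuous_im.tendsto _).comp hq
      have h0 : ∀ k, (qCLM x (f k)).im = 0 := by
        intro k
        have := (hf k).dotProduct_mulVec_nonneg x
        rw [Complex.le_def] at this
        simpa using this.2.symm
      simp only [h0] at him
      simpa using (tendsto_nhds_unique him tendsto_const_nhds).symm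

lemma posSemidef_smul_real {M : Matrix n n ℂ} (hM : M.PosSemidef) {r : ℝ} (hr : 0 ≤ r) :
    (r • M).PosSemidef := by
  have hrM : r • M = (r : ℂ) • M := by
    ext i j
    simp [Complex.real_smul]
  rw [hrM]
  rw [Matrix.posSemidef_iff_dotProduct_mulVec]
  constructor
  · show ((r:ℂ) • M)ᴴ = (r:ℂ) • M
    rw [Matrix.conjTranspose_smul, Complex.star_def, Complex.conj_ofReal, hM.1.eq]
  · intro x
    rw [Matrix.smul_mulVec, dotProduct_smul, smul_eq_mul]
    have h0 : (0:ℂ) ≤ (r:ℂ) := by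
      rw [Complex.le_def]; simp [hr]
    exact mul_nonneg h0 (hM.dotProduct_mulVec_nonneg x)

lemma posSemidef_intervalIntegral {f : ℝ → Matrix n n ℂ} {t : ℝ} (ht : 0 ≤ t)
    (hf : Continuous f) (h : ∀ s ∈ Set.Icc (0:ℝ) t, (f s).PosSemidef) :
    (∫ s in (0:ℝ)..t, f s).PosSemidef := by
  have hint : IntervalIntegrable f MeasureTheory.volume 0 t := hf.intervalIntegrable 0 t
  rw [Matrix.posSemidef_iff_dotProduct_mulVec]
  constructor
  · show (∫ s in (0:ℝ)..t, f s)ᴴ = _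
    have h1 : (∫ s in (0:ℝ)..t, f s)ᴴ = ∫ s in (0:ℝ)..t, (f s)ᴴ := by
      rw [← ctCLM_apply]
      exact ((ctCLM (n := n)).intervalIntegral_comp_comm hint).symm
    rw [h1]
    apply intervalIntegral.integral_congr
    intro s hs
    rw [Set.uIcc_of_le ht] at hs
    exact (h s hs).1
  · intro x
    have h2 : qCLM x (∫ s in (0:ℝ)..t, f s) = ∫ s in (0:ℝ)..t, qCLM x (f s) :=
      ((qCLM x).intervalIntegral_comp_comm hint).symm
    have hqc : Continuous fun s => qCLM x (f s) := (qCLM x).continuous.comp hf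
    rw [← qCLM_apply, h2, Complex.le_def]
    constructor
    · have h3 : (∫ s in (0:ℝ)..t, qCLM x (f s)).re
          = ∫ s in (0:ℝ)..t, (qCLM x (f s)).re := by
        exact (Complex.reCLM.intervalIntegral_comp_comm (hqc.intervalIntegrable 0 t)).symm
      rw [h3]
      simp only [Complex.zero_re]
      apply intervalIntegral.integral_nonneg ht
      intro s hs
      have := (h s hs).dotProduct_mulVec_nonneg x
      rw [Complex.le_def] at this
      simpa using this.1
    · have h4 : (∫ s in (0:ℝ)..t, qCLM x (f s)).im
          = ∫ s in (0:ℝ)..t, (qCLM x (f s)).im := by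
        exact (Complex.imCLM.intervalIntegral_comp_comm (hqc.intervalIntegrable 0 t)).symm
      rw [Complex.zero_im, h4]
      have h5 : ∀ s ∈ Set.uIcc (0:ℝ) t, (qCLM x (f s)).im = 0 := by
        intro s hs
        rw [Set.uIcc_of_le ht] at hs
        have := (h s hs).dotProduct_mulVec_nonneg x
        rw [Complex.le_def] at this
        simpa using this.2.symm
      rw [intervalIntegral.integral_congr h5]
      simp

lemma star_pi_single (i : n) (c : ℂ) :
    star (Pi.single i c : n → ℂ) = Pi.single i (starRingEnd ℂ c) := by
  ext k
  by_cases h : k = i <;> simp [Pi.single_apply, h]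

lemma psd_diag_nonneg {ρ : Matrix n n ℂ} (hρ : ρ.PosSemidef) (i : n) : 0 ≤ ρ i i := by
  have h := hρ.dotProduct_mulVec_nonneg (Pi.single i 1)
  have hval : dotProduct (star (Pi.single i 1 : n → ℂ)) (ρ *ᵥ Pi.single i 1) = ρ i i := by
    rw [star_pi_single, Matrix.mulVec_single, single_dotProduct]
    simp
  rwa [hval] at h

lemma psd_entry_norm_le {ρ : Matrix n n ℂ} (hρ : ρ.PosSemidef) (htr : ρ.trace = 1)
    (i j : n) : ‖ρ i j‖ ≤ 1 := by
  have hdle : ∀ i, ρ i i ≤ 1 := by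
    intro i
    calc ρ i i ≤ ∑ k, ρ k k :=
          Finset.single_le_sum (f := fun k => ρ k k)
            (fun k _ => psd_diag_nonneg hρ k) (Finset.mem_univ i)
      _ = ρ.trace := rfl
      _ = 1 := htr
  have hre : ∀ i, (ρ i i).re ≤ 1 := by
    intro i
    have := hdle i
    rw [Complex.le_def] at this
    simpa using this.1
  have hre0 : ∀ i, 0 ≤ (ρ i i).re := by
    intro i
    have := psd_diag_nonneg hρ i
    rw [Complex.le_def] at this
    simpa using this.1
  have him : ∀ i, (ρ i i).im = 0 := by
    intro i
    have := psd_diag_nonneg hρ i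
    rw [Complex.le_def] at this
    simpa using this.2.symm
  by_cases hij : i = j
  · subst hij
    have h1 : ρ i i = ((ρ i i).re : ℂ) := by
      apply Complex.ext <;> simp [him i]
    rw [h1, Complex.norm_real, Real.norm_eq_abs, abs_of_nonneg (hre0 i)]
    exact hre i
  -- off-diagonal case
  set z := ρ i j with hz
  by_cases hz0 : z = 0
  · simp [← hz, hz0]
  set r : ℝ := ‖z‖ with hr
  have hr0 : 0 < r := by simpa [hr] using norm_pos_iff.2 hz0
  have hrC : ((r:ℂ)) ≠ 0 := by
    simpa using ne_of_gt hr0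
  set c : ℂ := -z / r with hc
  have hzji : ρ j i = starRingEnd ℂ z := by
    have := congrFun (congrFun hρ.1 j) i
    simpa [Matrix.conjTranspose_apply] using this.symm
  have hzz : (starRingEnd ℂ) z * z = ((r^2 : ℝ) : ℂ) := by
    rw [mul_comm, Complex.mul_conj, Complex.normSq_eq_norm_sq, ← hr]
  have hcz : starRingEnd ℂ c * z = -(r:ℂ) := by
    rw [hc, map_div₀, map_neg, Complex.conj_ofReal, div_mul_eq_mul_div, neg_mul, hzz]
    rw [neg_div]
    congr 1
    push_cast
    field_simp
  have hcj : c * (starRingEnd ℂ) z = -(r:ℂ) := by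
    rw [hc, div_mul_eq_mul_div, neg_mul, mul_comm, hzz, neg_div]
    congr 1
    push_cast
    field_simp
  have hcc : starRingEnd ℂ c * c = 1 := by
    rw [hc, map_div₀, map_neg, Complex.conj_ofReal, div_mul_div_comm, neg_mul_neg, hzz]
    push_cast
    field_simp
  have hq := hρ.dotProduct_mulVec_nonneg (Pi.single i c + Pi.single j 1)
  have hval : dotProduct (star (Pi.single i c + Pi.single j 1))
      (ρ *ᵥ (Pi.single i c + Pi.single j 1))
      = (starRingEnd ℂ c * c) * ρ i i + starRingEnd ℂ c * ρ i j
        + c * ρ j i + ρ j j := by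
    rw [star_add, star_pi_single, star_pi_single, Matrix.mulVec_add,
      Matrix.mulVec_single, Matrix.mulVec_single]
    simp only [add_dotProduct, single_dotProduct, Pi.add_apply, _root_.map_one]
    simp only [Pi.smul_apply, op_smul_eq_mul, Matrix.col_apply]
    ring
  rw [hval, ← hz, hcc, one_mul, hcz, hzji, hcj, Complex.le_def] at hq
  have hq1 := hq.1
  simp only [Complex.add_re, Complex.neg_re, Complex.ofReal_re, Complex.zero_re] at hq1
  have : r ≤ 1 := by linarith [hre i, hre j]
  simpa [← hz, ← hr] using this


-- GLUE SECTION
lemma linfty_norm_le_card {A : Matrix n n ℂ} (h : ∀ i j, ‖A i j‖ ≤ 1) :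
    ‖A‖ ≤ (Fintype.card n : ℝ) := by
  have h1 : ‖A‖₊ ≤ (Fintype.card n : ℝ≥0) := by
    rw [Matrix.linfty_opNNNorm_def]
    apply Finset.sup_le
    intro i _
    calc ∑ j, ‖A i j‖₊ ≤ ∑ _j : n, 1 := by
          apply Finset.sum_le_sum
          intro j _
          rw [← NNReal.coe_le_coe]
          simpa using h i j
      _ = (Fintype.card n : ℝ≥0) := by simp
  calc ‖A‖ = ((‖A‖₊ : ℝ≥0) : ℝ) := (coe_nnnorm A).symm
    _ ≤ ((Fintype.card n : ℝ≥0) : ℝ) := NNReal.coe_le_coe.2 h1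
    _ = (Fintype.card n : ℝ) := by simp

noncomputable def traceCLM : Matrix n n ℂ →L[ℂ] ℂ :=
  (Matrix.traceLinearMap n ℂ ℂ).toContinuousLinearMap

@[simp] lemma traceCLM_apply (M : Matrix n n ℂ) : traceCLM M = M.trace := rfl

lemma trace_schrodGen_zero (H L ρ : Matrix n n ℂ) : (schrodGenLM H L ρ).trace = 0 := by
  rw [schrodGenLM_apply]
  rw [Matrix.trace_sub, Matrix.trace_add, Matrix.trace_smul, Matrix.trace_smul,
    Matrix.trace_sub, Matrix.trace_add]
  rw [Matrix.trace_mul_comm H ρ, Matrix.trace_mul_comm (L * ρ) Lᴴ,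
    Matrix.trace_mul_comm ρ (Lᴴ * L)]
  simp only [smul_eq_mul, ← mul_assoc]
  ring

noncomputable def cCLM (H L : Matrix n n ℂ) : Matrix n n ℂ →L[ℂ] Matrix n n ℂ :=
  LinearMap.toContinuousLinearMap (schrodGenLM H L)

lemma cCLM_eq {H : Matrix n n ℂ} (hH : H.IsHermitian) (L : Matrix n n ℂ) :
    cCLM H L = aCLM H L + bCLM L := by
  unfold cCLM
  exact (aCLM_add_bCLM hH L).symm

@[simp] lemma cCLM_apply (H L ρ : Matrix n n ℂ) : cCLM H L ρ = schrodGenLM H L ρ := rfl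

lemma real_smul_CLM (t : ℝ) (x : Matrix n n ℂ →L[ℂ] Matrix n n ℂ) :
    t • x = (t : ℂ) • x := by
  apply ContinuousLinearMap.ext
  intro ρ
  show t • x ρ = (t:ℂ) • x ρ
  ext i j
  simp [Complex.real_smul]

lemma traj_eq (H L ρ₀ : Matrix n n ℂ) (t : ℝ) :
    traj H L ρ₀ t = eR (cCLM H L) t ρ₀ := by
  rw [traj, eR, ← real_smul_CLM]
  rfl

lemma eR_neg_eq (a : Matrix n n ℂ →L[ℂ] Matrix n n ℂ) (s : ℝ) :
    eR (-a) s = eR a (-s) := by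
  rw [eR, eR]
  congr 1
  push_cast
  rw [smul_neg, neg_smul]

lemma picard_psd {H : Matrix n n ℂ} (hH : H.IsHermitian) (L : Matrix n n ℂ)
    {ρ : Matrix n n ℂ} (hρ : ρ.PosSemidef) (k : ℕ) :
    ∀ t : ℝ, 0 ≤ t → ((picard (aCLM H L) (bCLM L) k t) ρ).PosSemidef := by
  induction k with
  | zero =>
      intro t ht
      exact exp_aCLM_psd hH L t hρ
  | succ k ih =>
      intro t ht
      show ((eR (aCLM H L) t + eR (aCLM H L) t * ∫ s in (0:ℝ)..t,
        eR (-(aCLM H L)) s * bCLM L * picard (aCLM H L) (bCLM L) k s) ρ).PosSemidef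
      rw [ContinuousLinearMap.add_apply, ContinuousLinearMap.mul_apply]
      have hφcont : Continuous fun s : ℝ =>
          eR (-(aCLM H L)) s * bCLM L * picard (aCLM H L) (bCLM L) k s :=
        ((eR_continuous _).mul continuous_const).mul (picard_continuous _ _ k)
      have hint : IntervalIntegrable (fun s : ℝ =>
          eR (-(aCLM H L)) s * bCLM L * picard (aCLM H L) (bCLM L) k s)
          MeasureTheory.volume 0 t := hφcont.intervalIntegrable 0 t
      rw [ContinuousLinearMap.intervalIntegral_apply hint ρ]
      have happly_cont : Continuous fun s : ℝ =>
          (eR (-(aCLM H L)) s * bCLM L * picard (aCLM H L) (bCLM L) k s) ρ :=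
        (ContinuousLinearMap.apply ℂ (Matrix n n ℂ) ρ).continuous.comp hφcont
      rw [(eR (aCLM H L) t).intervalIntegral_comp_comm
        (happly_cont.intervalIntegrable 0 t) |>.symm]
      apply Matrix.PosSemidef.add (exp_aCLM_psd hH L t hρ)
      apply posSemidef_intervalIntegral ht
      · exact (eR (aCLM H L) t).continuous.comp happly_cont
      · intro s hs
        simp only [ContinuousLinearMap.mul_apply]
        apply exp_aCLM_psd hH L t
        rw [eR_neg_eq]
        exact exp_aCLM_psd hH L (-s) (bCLM_psd L (ih s hs.1))

lemma traj_psd {H : Matrix n n ℂ} (hH : H.IsHermitian) (L : Matrix n n ℂ)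
    {ρ₀ : Matrix n n ℂ} (hρ₀ : ρ₀.PosSemidef) (t : ℝ) (ht : 0 ≤ t) :
    (traj H L ρ₀ t).PosSemidef := by
  rw [traj_eq, cCLM_eq hH]
  have hpic := picard_tendsto (aCLM H L) (bCLM L) ht
  have happ : Filter.Tendsto (fun k => (picard (aCLM H L) (bCLM L) k t) ρ₀)
      Filter.atTop (nhds ((eR (aCLM H L + bCLM L) t) ρ₀)) :=
    ((ContinuousLinearMap.apply ℂ (Matrix n n ℂ) ρ₀).continuous.tendsto _).comp hpic
  exact posSemidef_of_tendsto happ (fun k => picard_psd hH L hρ₀ k t ht)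

lemma hasDerivAt_traj (H L ρ₀ : Matrix n n ℂ) (t : ℝ) :
    HasDerivAt (traj H L ρ₀) (schrodGenLM H L (traj H L ρ₀ t)) t := by
  have h1 : HasDerivAt (eR (cCLM H L)) (cCLM H L * eR (cCLM H L) t) t :=
    hasDerivAt_eR _ t
  have h2 := (((ContinuousLinearMap.apply ℂ (Matrix n n ℂ) ρ₀).restrictScalars
    ℝ).hasFDerivAt.comp_hasDerivAt t h1)
  have h3 : (fun u => ((ContinuousLinearMap.apply ℂ (Matrix n n ℂ) ρ₀).restrictScalars ℝ)
      (eR (cCLM H L) u))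
      = traj H L ρ₀ := by
    funext u
    rw [traj_eq]
    rfl
  simp only [Function.comp_def] at h2
  rw [h3] at h2
  exact h2

lemma traj_continuous (H L ρ₀ : Matrix n n ℂ) : Continuous (traj H L ρ₀) := by
  have : Continuous fun t => (eR (cCLM H L) t) ρ₀ :=
    (ContinuousLinearMap.apply ℂ (Matrix n n ℂ) ρ₀).continuous.comp (eR_continuous _)
  convert this using 1
  exact funext (traj_eq H L ρ₀)

lemma traj_trace (H L ρ₀ : Matrix n n ℂ) (htr : ρ₀.trace = 1) (t : ℝ) :
    (traj H L ρ₀ t).trace = 1 := by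
  have hder : ∀ u : ℝ, HasDerivAt (fun v => (traj H L ρ₀ v).trace) 0 u := by
    intro u
    have h1 := hasDerivAt_traj H L ρ₀ u
    have h2 := ((traceCLM (n := n)).restrictScalars ℝ).hasFDerivAt.comp_hasDerivAt u h1
    have h3 : ((traceCLM (n := n)).restrictScalars ℝ) (schrodGenLM H L (traj H L ρ₀ u)) = 0 := by
      show traceCLM (schrodGenLM H L (traj H L ρ₀ u)) = 0
      rw [traceCLM_apply, trace_schrodGen_zero]
    rw [h3] at h2
    exact h2
  have hconst : ∀ u : ℝ, (traj H L ρ₀ u).trace = (traj H L ρ₀ 0).trace := by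
    intro u
    exact is_const_of_deriv_eq_zero
      (fun v => (hder v).differentiableAt) (fun v => (hder v).deriv) u 0
  rw [hconst t]
  have h0 : traj H L ρ₀ 0 = ρ₀ := by
    rw [traj_eq, eR_zero, ContinuousLinearMap.one_apply]
  rw [h0, htr]

end Aux2

end Inst

noncomputable instance matENormed [Fintype n] : ENormedAddCommMonoid (Matrix n n ℂ) :=
  NormedAddCommGroup.toENormedAddCommMonoid

/-- any limit of Cesàro averages of a state trajectory is an invariant state. -/
theorem cesaro_limit_invariant
    [Fintype n] [DecidableEq n] [Nonempty n]
    (H L : Matrix n n ℂ) (hH : H.IsHermitian)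
    (ρ₀ : Matrix n n ℂ) (hρ₀ : ρ₀.PosSemidef) (hρ₀tr : ρ₀.trace = 1)
    (T : ℕ → ℝ) (hT : ∀ k, 0 < T k)
    (hTtop : Filter.Tendsto T Filter.atTop Filter.atTop)
    (σ : Matrix n n ℂ)
    (hconv : Filter.Tendsto
      (fun k => (T k)⁻¹ • ∫ t in (0 : ℝ)..(T k), traj H L ρ₀ t)
      Filter.atTop (nhds σ)) :
    σ.PosSemidef ∧ σ.trace = 1 ∧ schrodGenLM H L σ = 0 := by
  have htraj_cont := traj_continuous H L ρ₀
  -- positive semidefiniteness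
  have havg_psd : ∀ k, ((T k)⁻¹ • ∫ t in (0:ℝ)..(T k), traj H L ρ₀ t).PosSemidef := by
    intro k
    apply posSemidef_smul_real _ (inv_nonneg.2 (hT k).le)
    exact posSemidef_intervalIntegral (hT k).le htraj_cont
      (fun s hs => traj_psd hH L hρ₀ s hs.1)
  have hσpsd : σ.PosSemidef := posSemidef_of_tendsto hconv havg_psd
  -- trace
  have havg_tr : ∀ k, ((T k)⁻¹ • ∫ t in (0:ℝ)..(T k), traj H L ρ₀ t).trace = 1 := by
    intro k
    rw [Matrix.trace_smul]
    have h1 : (∫ t in (0:ℝ)..(T k), traj H L ρ₀ t).trace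
        = ∫ t in (0:ℝ)..(T k), (traj H L ρ₀ t).trace := by
      rw [← traceCLM_apply]
      exact ((traceCLM (n := n)).intervalIntegral_comp_comm
        (htraj_cont.intervalIntegrable 0 (T k))).symm
    rw [h1]
    have h2 : ∀ t ∈ Set.uIcc (0:ℝ) (T k), (traj H L ρ₀ t).trace = 1 :=
      fun t _ => traj_trace H L ρ₀ hρ₀tr t
    rw [intervalIntegral.integral_congr (g := fun _ => (1:ℂ)) h2,
      intervalIntegral.integral_const, sub_zero, smul_smul, inv_mul_cancel₀ (hT k).ne', one_smul]
  have hσtr : σ.trace = 1 := by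
    have h3 : Filter.Tendsto
        (fun k => ((T k)⁻¹ • ∫ t in (0:ℝ)..(T k), traj H L ρ₀ t).trace)
        Filter.atTop (nhds σ.trace) :=
      (((traceCLM (n := n)).continuous.tendsto σ).comp hconv)
    simp only [havg_tr] at h3
    exact (tendsto_nhds_unique h3 tendsto_const_nhds)
  -- generator
  have hFTC : ∀ k, (∫ t in (0:ℝ)..(T k), cCLM H L (traj H L ρ₀ t))
      = traj H L ρ₀ (T k) - ρ₀ := by
    intro k
    have h0 : traj H L ρ₀ 0 = ρ₀ := by
      rw [traj_eq, eR_zero, ContinuousLinearMap.one_apply]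
    have := intervalIntegral.integral_eq_sub_of_hasDerivAt
      (f := traj H L ρ₀) (f' := fun t => cCLM H L (traj H L ρ₀ t))
      (fun t _ => hasDerivAt_traj H L ρ₀ t)
      (((cCLM H L).continuous.comp htraj_cont).intervalIntegrable 0 (T k))
    rw [this, h0]
  have happ : ∀ k, cCLM H L ((T k)⁻¹ • ∫ t in (0:ℝ)..(T k), traj H L ρ₀ t)
      = (T k)⁻¹ • (traj H L ρ₀ (T k) - ρ₀) := by
    intro k
    rw [ContinuousLinearMap.map_smul_of_tower]
    congr 1
    rw [← hFTC k]
    exact ((cCLM H L).intervalIntegral_comp_comm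
      (htraj_cont.intervalIntegrable 0 (T k))).symm
  have hnorm0 : Filter.Tendsto
      (fun k => cCLM H L ((T k)⁻¹ • ∫ t in (0:ℝ)..(T k), traj H L ρ₀ t))
      Filter.atTop (nhds 0) := by
    set C : ℝ := (Fintype.card n : ℝ) + ‖ρ₀‖ with hC
    have hb : ∀ k, ‖cCLM H L ((T k)⁻¹ • ∫ t in (0:ℝ)..(T k), traj H L ρ₀ t)‖
        ≤ (T k)⁻¹ * C := by
      intro k
      rw [happ k, norm_smul, Real.norm_eq_abs, abs_of_nonneg (inv_nonneg.2 (hT k).le)]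
      apply mul_le_mul_of_nonneg_left _ (inv_nonneg.2 (hT k).le)
      calc ‖traj H L ρ₀ (T k) - ρ₀‖ ≤ ‖traj H L ρ₀ (T k)‖ + ‖ρ₀‖ := norm_sub_le _ _
        _ ≤ C := by
            apply add_le_add_left
            apply linfty_norm_le_card
            intro i j
            exact psd_entry_norm_le (traj_psd hH L hρ₀ _ (hT k).le)
              (traj_trace H L ρ₀ hρ₀tr _) i j
    have hgt : Filter.Tendsto (fun k => (T k)⁻¹ * C) Filter.atTop (nhds 0) := by
      have := (hTtop.inv_tendsto_atTop).mul_const C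
      rwa [zero_mul] at this
    exact squeeze_zero_norm hb hgt
  have h5 : Filter.Tendsto
      (fun k => cCLM H L ((T k)⁻¹ • ∫ t in (0:ℝ)..(T k), traj H L ρ₀ t))
      Filter.atTop (nhds (cCLM H L σ)) := ((cCLM H L).continuous.tendsto σ).comp hconv
  have h6 : cCLM H L σ = 0 := tendsto_nhds_unique h5 hnorm0
  exact ⟨hσpsd, hσtr, h6⟩
end

section
/- Let (p_k)_{k ∈ ℕ} be a tight sequence of probability mass functions on ℕ. Then there exist a strictly increasing function φ : ℕ → ℕ and a probability mass function p on ℕ such that for every i : ℕ, p_{φ(k)} i → p i as k → ∞. -/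
/-- a tight sequence of probability mass functions on `ℕ` admits a subsequence
converging pointwise to a probability mass function. -/
theorem tight_sequence_has_convergent_subsequence
    (p : ℕ → ℕ → ℝ)
    (hp0 : ∀ k i, 0 ≤ p k i) (hp1 : ∀ k, ∑' i, p k i = 1)
    (htight : ∀ ε > (0 : ℝ), ∃ m : ℕ, ∀ k, 1 - ε < ∑ i ∈ Finset.range m, p k i) :
    ∃ (φ : ℕ → ℕ) (q : ℕ → ℝ), StrictMono φ ∧ (∀ i, 0 ≤ q i) ∧ (∑' i, q i = 1) ∧
      ∀ i, Filter.Tendsto (fun k => p (φ k) i) Filter.atTop (nhds (q i)) := by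
  have hsummable : ∀ k, Summable (p k) := by
    intro k
    by_contra h
    have := hp1 k
    rw [tsum_eq_zero_of_not_summable h] at this
    norm_num at this
  have hle1 : ∀ k i, p k i ≤ 1 := by
    intro k i
    calc p k i ≤ ∑' j, p k j := Summable.le_tsum (hsummable k) i (fun j _ => hp0 k j)
    _ = 1 := hp1 k
  have hsumle : ∀ k (s : Finset ℕ), ∑ i ∈ s, p k i ≤ 1 := by
    intro k s
    calc ∑ i ∈ s, p k i ≤ ∑' j, p k j := Summable.sum_le_tsum s (fun j _ => hp0 k j) (hsummable k)
    _ = 1 := hp1 k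
  -- sequential compactness of the product of intervals
  have hcomp : IsCompact (Set.pi Set.univ (fun _ : ℕ => Set.Icc (0:ℝ) 1)) :=
    isCompact_univ_pi (fun _ => isCompact_Icc)
  have hmem : ∀ k, (p k) ∈ Set.pi Set.univ (fun _ : ℕ => Set.Icc (0:ℝ) 1) := by
    intro k i _; exact ⟨hp0 k i, hle1 k i⟩
  obtain ⟨q, hq, φ, hφ, htend⟩ := hcomp.tendsto_subseq hmem
  have htend' : ∀ i, Filter.Tendsto (fun k => p (φ k) i) Filter.atTop (nhds (q i)) := by
    intro i
    have := (tendsto_pi_nhds.1 htend) i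
    exact this
  have hq0 : ∀ i, 0 ≤ q i := fun i => (hq i (Set.mem_univ i)).1
  -- partial sums of q bounded by 1
  have hpartial : ∀ m : ℕ, ∑ i ∈ Finset.range m, q i ≤ 1 := by
    intro m
    have h1 : Filter.Tendsto (fun k => ∑ i ∈ Finset.range m, p (φ k) i) Filter.atTop
        (nhds (∑ i ∈ Finset.range m, q i)) :=
      tendsto_finset_sum _ (fun i _ => htend' i)
    exact le_of_tendsto h1 (Filter.Eventually.of_forall fun k => hsumle (φ k) _)
  have hqs : Summable q := summable_of_sum_range_le hq0 hpartial
  have hle : ∑' i, q i ≤ 1 := Summable.tsum_le_of_sum_range_le hqs hpartial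
  have hge : ∀ ε > (0:ℝ), 1 - ε ≤ ∑' i, q i := by
    intro ε hε
    obtain ⟨m, hm⟩ := htight ε hε
    have h1 : Filter.Tendsto (fun k => ∑ i ∈ Finset.range m, p (φ k) i) Filter.atTop
        (nhds (∑ i ∈ Finset.range m, q i)) :=
      tendsto_finset_sum _ (fun i _ => htend' i)
    have h2 : 1 - ε ≤ ∑ i ∈ Finset.range m, q i :=
      le_of_tendsto_of_tendsto' tendsto_const_nhds h1 (fun k => le_of_lt (hm (φ k)))
    exact h2.trans (Summable.sum_le_tsum _ (fun j _ => hq0 j) hqs)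
  have hsum1 : ∑' i, q i = 1 := by
    refine le_antisymm hle ?_
    by_contra h
    push_neg at h
    have hε : (0:ℝ) < (1 - ∑' i, q i)/2 := by linarith
    have := hge _ hε
    linarith
  exact ⟨φ, q, hφ, hq0, hsum1, htend'⟩
end

section
/- Let V : Matrix n n ℂ be Hermitian and positive semidefinite with -𝓖(V) positive semidefinite (the condition 𝓖(V) ≤ 0) and 𝓖(V)*V = V*𝓖(V), and let ρ be an invariant state. Then trace(ρ * (V*𝓖(V) + 𝓖(V)*V)) = 0 and trace(ρ * ((Lᴴ*V - V*Lᴴ)*(V*L - L*V))) = 0. -/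
open Matrix ComplexOrder

variable {n : Type*}

/-- If `trace(AᴴA) = 0` then `A = 0`. -/
lemma my_trace_conjT_mul_self_eq_zero [Fintype n] (A : Matrix n n ℂ)
    (h : (Aᴴ * A).trace = 0) : A = 0 := by
  have h' : ∑ j, ∑ i, (Complex.normSq (A i j) : ℂ) = 0 := by
    simpa [Matrix.trace, Matrix.diag, Matrix.mul_apply, Matrix.conjTranspose_apply,
      Complex.normSq_eq_conj_mul_self, RCLike.star_def] using h
  have h'' : ∑ j, ∑ i, Complex.normSq (A i j) = 0 := by
    exact_mod_cast h'
  ext i j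
  have hj := (Finset.sum_eq_zero_iff_of_nonneg (fun j _ => Finset.sum_nonneg
    (fun i _ => Complex.normSq_nonneg _))).mp h'' j (Finset.mem_univ j)
  have hi := (Finset.sum_eq_zero_iff_of_nonneg
    (fun i _ => Complex.normSq_nonneg _)).mp hj i (Finset.mem_univ i)
  simpa using Complex.normSq_eq_zero.mp hi

open scoped MatrixOrder in
/-- If `A, B` are PSD and `trace(A*B) = 0` then `A*B = 0`. -/
lemma my_psd_mul_eq_zero [Fintype n] [DecidableEq n] {A B : Matrix n n ℂ}
    (hA : A.PosSemidef) (hB : B.PosSemidef) (h : (A * B).trace = 0) : A * B = 0 := by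
  set a := CFC.sqrt A with ha
  set b := CFC.sqrt B with hb
  have haa : a * a = A := CFC.sqrt_mul_sqrt_self A hA.nonneg
  have hbb : b * b = B := CFC.sqrt_mul_sqrt_self B hB.nonneg
  have haH : aᴴ = a := (CFC.sqrt_nonneg A).posSemidef.1
  have hbH : bᴴ = b := (CFC.sqrt_nonneg B).posSemidef.1
  have key : a * b = 0 := by
    apply my_trace_conjT_mul_self_eq_zero
    rw [conjTranspose_mul, haH, hbH]
    calc ((b * a) * (a * b)).trace = ((a * b) * (b * a)).trace := trace_mul_comm _ _
      _ = ((A * B)).trace := by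
          rw [Matrix.mul_assoc a b (b * a), ← Matrix.mul_assoc b b a, hbb,
            ← Matrix.mul_assoc a B a, trace_mul_comm, ← Matrix.mul_assoc, haa]
      _ = 0 := h
  have hfac : A * B = a * ((a * b) * b) := by rw [← haa, ← hbb]; noncomm_ring
  rw [hfac, key, Matrix.zero_mul, Matrix.mul_zero]

/-- Duality between the Heisenberg and Schrödinger generators. -/
lemma my_gen_duality [Fintype n] [DecidableEq n] (H L ρ X : Matrix n n ℂ) :
    (ρ * heisGen H L X).trace = (schrodGen H L ρ * X).trace := by
  simp only [heisGen, schrodGen, Matrix.mul_add, Matrix.add_mul, Matrix.mul_sub, Matrix.sub_mul,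
    Matrix.smul_mul, Matrix.mul_smul, Matrix.mul_assoc, trace_add, trace_sub, trace_smul,
    smul_eq_mul]
  have e1 : (ρ * (X * H)).trace = (H * (ρ * X)).trace := by
    rw [← Matrix.mul_assoc, Matrix.trace_mul_cycle, Matrix.mul_assoc]
  have e2 : (ρ * (Lᴴ * (X * L))).trace = (L * (ρ * (Lᴴ * X))).trace := by
    rw [Matrix.trace_mul_comm, Matrix.mul_assoc, Matrix.mul_assoc, Matrix.trace_mul_comm,
      Matrix.mul_assoc, Matrix.trace_mul_comm, Matrix.mul_assoc, Matrix.mul_assoc]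
  have e3 : (ρ * (X * (Lᴴ * L))).trace = (Lᴴ * (L * (ρ * X))).trace := by
    rw [← Matrix.mul_assoc, Matrix.trace_mul_comm, ← Matrix.mul_assoc, Matrix.mul_assoc,
      Matrix.mul_assoc]
  rw [e1, e2, e3]
  ring

/-- The dissipation identity. -/
lemma my_dissipation [Fintype n] [DecidableEq n] (H L V : Matrix n n ℂ) :
    heisGen H L (V * V) = V * heisGen H L V + heisGen H L V * V
      + (Lᴴ * V - V * Lᴴ) * (V * L - L * V) := by
  simp only [heisGen, Matrix.mul_add, Matrix.add_mul, Matrix.mul_sub, Matrix.sub_mul,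
    Matrix.smul_mul, Matrix.mul_smul, Matrix.mul_assoc]
  module

/-- for a Lyapunov operator `V` with `𝓖(V) ≤ 0` commuting with `V`, and an
invariant state `ρ`, both `⟨V·𝓖(V) + 𝓖(V)·V⟩_ρ` and `⟨[Lᴴ,V][V,L]⟩_ρ` vanish. -/
theorem invariant_state_dissipation_identities
    [Fintype n] [DecidableEq n] [Nonempty n]
    (H L : Matrix n n ℂ) (hH : H.IsHermitian)
    (V : Matrix n n ℂ) (hV : V.IsHermitian) (hVpos : V.PosSemidef)
    (hGV : (-(heisGen H L V)).PosSemidef)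
    (hcomm : heisGen H L V * V = V * heisGen H L V)
    (ρ : Matrix n n ℂ) (hρ : ρ.PosSemidef) (hρtr : ρ.trace = 1)
    (hinv : schrodGen H L ρ = 0) :
    (ρ * (V * heisGen H L V + heisGen H L V * V)).trace = 0
      ∧ (ρ * ((Lᴴ * V - V * Lᴴ) * (V * L - L * V))).trace = 0 := by
  set G := heisGen H L V with hGdef
  have hG : Gᴴ = G := by
    have h1 : (-G)ᴴ = -G := hGV.1
    rw [conjTranspose_neg] at h1
    exact neg_injective h1
  -- trace(ρ * (-G)) = 0 by duality and invariance
  have htr : (ρ * (-G)).trace = 0 := by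
    rw [Matrix.mul_neg, trace_neg, hGdef, my_gen_duality, hinv, Matrix.zero_mul, trace_zero,
      neg_zero]
  have hz : ρ * (-G) = 0 := my_psd_mul_eq_zero hρ hGV htr
  have hρG : ρ * G = 0 := by
    rw [Matrix.mul_neg, neg_eq_zero] at hz
    exact hz
  have hGρ : G * ρ = 0 := by
    have h2 := congrArg conjTranspose hρG
    rwa [conjTranspose_mul, hG, hρ.1, conjTranspose_zero] at h2
  have t1 : (ρ * (V * G)).trace = 0 := by
    rw [trace_mul_comm, Matrix.mul_assoc, hGρ, Matrix.mul_zero, trace_zero]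
  have t2 : (ρ * (G * V)).trace = 0 := by
    rw [← Matrix.mul_assoc, hρG, Matrix.zero_mul, trace_zero]
  have part1 : (ρ * (V * G + G * V)).trace = 0 := by
    rw [Matrix.mul_add, trace_add, t1, t2, add_zero]
  refine ⟨part1, ?_⟩
  have hΦ : (Lᴴ * V - V * Lᴴ) * (V * L - L * V) = heisGen H L (V * V) - (V * G + G * V) := by
    rw [my_dissipation H L V, ← hGdef]
    abel
  rw [hΦ, Matrix.mul_sub, trace_sub, my_gen_duality, hinv, Matrix.zero_mul, trace_zero, part1,
    sub_zero]
end
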